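/- arXiv:1709.04888 — 4 statements merged into one kernel-verified Lean document; each statement's English description precedes it below -/
import Mathlib

section
/- Let N ≥ 3, γ < (N-2)^2/4, Γ = √((N-2)^2/4 - γ), β_- = (N-2)/2 - Γ, α_N = (4Γ²N/(N-2))^((N-2)/4). Then for every μ > 0, the function U_μ(x) = α_N μ^Γ / (|x|^{β_-} (μ^{4Γ/(N-2)} + |x|^{4Γ/(N-2)})^{(N-2)/2}) satisfies -ΔU_μ - γ U_μ/|x|² = U_μ^{(N+2)/(N-2)} on R^N \ {0}. -/
open Real Filter

noncomputable def Tfun (m q p e s : ℝ) : ℝ := s ^ p * (m + s ^ q) ^ e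

lemma hasDerivAt_Tfun {m q : ℝ} (hm : 0 < m) (p e : ℝ) {s : ℝ} (hs : 0 < s) :
    HasDerivAt (Tfun m q p e)
      (p * Tfun m q (p - 1) e s + e * q * Tfun m q (p + q - 1) (e - 1) s) s := by
  have hw : 0 < m + s ^ q := by positivity
  have h1 : HasDerivAt (fun s : ℝ => s ^ p) (p * s ^ (p - 1)) s :=
    Real.hasDerivAt_rpow_const (Or.inl hs.ne')
  have h2 : HasDerivAt (fun s : ℝ => m + s ^ q) (q * s ^ (q - 1)) s :=
    (Real.hasDerivAt_rpow_const (Or.inl hs.ne')).const_add m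
  have h3 : HasDerivAt (fun s : ℝ => (m + s ^ q) ^ e)
      (q * s ^ (q - 1) * e * (m + s ^ q) ^ (e - 1)) s :=
    h2.rpow_const (Or.inl hw.ne')
  have h4 := h1.mul h3
  convert h4 using 1
  · rfl
  · rfl
  · rfl
  unfold Tfun
  have e1 : s ^ (p + q - 1) = s ^ p * s ^ (q - 1) := by
    rw [← Real.rpow_add hs]; ring_nf
  rw [e1]; ring
open Real Filter


/-- Coordinate-wise Laplacian of a function on `ℝ^N`. -/
noncomputable def lap {N : ℕ} (f : EuclideanSpace ℝ (Fin N) → ℝ)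
    (x : EuclideanSpace ℝ (Fin N)) : ℝ :=
  ∑ i : Fin N, iteratedDeriv 2 (fun t : ℝ => f (x + t • EuclideanSpace.single i (1 : ℝ))) 0

lemma lap_radial (N : ℕ) (F F₁ F₂ : ℝ → ℝ)
    (hF₁ : ∀ s : ℝ, 0 < s → HasDerivAt F (F₁ s) s)
    (hF₂ : ∀ s : ℝ, 0 < s → HasDerivAt F₁ (F₂ s) s)
    (U : EuclideanSpace ℝ (Fin N) → ℝ)
    (hU : ∀ y : EuclideanSpace ℝ (Fin N), y ≠ 0 → U y = F (‖y‖ ^ 2))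
    (x : EuclideanSpace ℝ (Fin N)) (hx : x ≠ 0) :
    lap U x = 4 * ‖x‖ ^ 2 * F₂ (‖x‖ ^ 2) + 2 * N * F₁ (‖x‖ ^ 2) := by
  have hr2 : 0 < ‖x‖ ^ 2 := by
    have := norm_pos_iff.mpr hx
    positivity
  have key : ∀ i : Fin N,
      iteratedDeriv 2 (fun t : ℝ => U (x + t • EuclideanSpace.single i (1 : ℝ))) 0
        = 4 * (x i) ^ 2 * F₂ (‖x‖ ^ 2) + 2 * F₁ (‖x‖ ^ 2) := by
    intro i
    set q : ℝ → ℝ := fun t => ‖x‖ ^ 2 + 2 * x i * t + t ^ 2 with hqdef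
    have hnorm : ∀ t : ℝ, ‖x + t • EuclideanSpace.single i (1 : ℝ)‖ ^ 2 = q t := by
      intro t
      rw [norm_add_sq_real]
      rw [real_inner_smul_right, EuclideanSpace.inner_single_right]
      simp [norm_smul, EuclideanSpace.norm_single, mul_pow, hqdef]
      ring
    have hq' : ∀ t : ℝ, HasDerivAt q (2 * x i + 2 * t) t := by
      intro t
      have h1 : HasDerivAt (fun t : ℝ => ‖x‖ ^ 2 + 2 * x i * t + t ^ 2)
          (2 * x i * 1 + 2 * t ^ 1) t :=
        (((hasDerivAt_id t).const_mul (2 * x i)).const_add (‖x‖ ^ 2)).add (hasDerivAt_pow 2 t)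
      simpa using h1
    have hqc : Continuous q := by fun_prop
    have hq0 : q 0 = ‖x‖ ^ 2 := by simp [hqdef]
    have hpos : ∀ᶠ t in nhds (0 : ℝ), 0 < q t := by
      have ho : IsOpen {t : ℝ | 0 < q t} := isOpen_lt continuous_const hqc
      exact Filter.eventually_of_mem (ho.mem_nhds (by simp [Set.mem_setOf_eq, hq0, hr2]))
        (fun t ht => ht)
    have heq : (fun t : ℝ => U (x + t • EuclideanSpace.single i (1 : ℝ)))
        =ᶠ[nhds (0 : ℝ)] (fun t => F (q t)) := by
      refine hpos.mono (fun t ht => ?_)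
      have hy : x + t • EuclideanSpace.single i (1 : ℝ) ≠ 0 := by
        intro h0
        rw [← hnorm t, h0] at ht
        simp at ht
      show U _ = F (q t)
      rw [hU _ hy, hnorm t]
    have hg : ∀ t : ℝ, 0 < q t →
        HasDerivAt (fun t => F (q t)) (F₁ (q t) * (2 * x i + 2 * t)) t :=
      fun t ht => (hF₁ (q t) ht).comp t (hq' t)
    have hderiv_g : deriv (fun t => F (q t)) =ᶠ[nhds (0 : ℝ)]
        (fun t => F₁ (q t) * (2 * x i + 2 * t)) :=
      hpos.mono fun t ht => (hg t ht).deriv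
    have hg1 : HasDerivAt (fun t => F₁ (q t) * (2 * x i + 2 * t))
        (F₂ (q 0) * (2 * x i + 2 * 0) * (2 * x i + 2 * 0) + F₁ (q 0) * 2) 0 := by
      have ha : HasDerivAt (fun t => F₁ (q t)) (F₂ (q 0) * (2 * x i + 2 * 0)) 0 :=
        (hF₂ (q 0) (by rw [hq0]; exact hr2)).comp 0 (hq' 0)
      have hb : HasDerivAt (fun t : ℝ => 2 * x i + 2 * t) 2 0 := by
        simpa using ((hasDerivAt_id (0 : ℝ)).const_mul 2).const_add (2 * x i)
      exact ha.mul hb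
    have hfinal : deriv (deriv (fun t : ℝ => U (x + t • EuclideanSpace.single i (1 : ℝ)))) 0
        = F₂ (q 0) * (2 * x i + 2 * 0) * (2 * x i + 2 * 0) + F₁ (q 0) * 2 := by
      have e1 : deriv (fun t : ℝ => U (x + t • EuclideanSpace.single i (1 : ℝ)))
          =ᶠ[nhds (0 : ℝ)] (fun t => F₁ (q t) * (2 * x i + 2 * t)) :=
        heq.deriv.trans hderiv_g
      rw [e1.deriv_eq, hg1.deriv]
    rw [iteratedDeriv_succ, iteratedDeriv_one, hfinal, hq0]
    ring
  unfold lap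
  rw [Finset.sum_congr rfl (fun i _ => key i), Finset.sum_add_distrib,
    Finset.sum_const, ← Finset.sum_mul]
  have hsum : ∑ i : Fin N, (x i) ^ 2 = ‖x‖ ^ 2 := by
    rw [EuclideanSpace.norm_eq, Real.sq_sqrt (by positivity)]
    simp [sq_abs]
  simp only [← Finset.sum_mul]
  rw [show (∑ i : Fin N, 4 * x i ^ 2) = 4 * ‖x‖ ^ 2 by rw [← Finset.mul_sum, hsum]]
  simp [Finset.card_univ]
  ring


set_option maxHeartbeats 2000000 in
/-- The bubbles `U_μ` solve the critical Hardy–Schrödinger equation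
`-ΔU_μ - γ U_μ/|x|² = U_μ^{(N+2)/(N-2)}` on `ℝ^N \ {0}`. -/
theorem bubble_solves (N : ℕ) (hN : 3 ≤ N) (γ Γ βm αN : ℝ)
    (hγ : γ < ((N : ℝ) - 2) ^ 2 / 4)
    (hΓ : Γ = Real.sqrt (((N : ℝ) - 2) ^ 2 / 4 - γ))
    (hβm : βm = ((N : ℝ) - 2) / 2 - Γ)
    (hαN : αN = (4 * Γ ^ 2 * (N : ℝ) / ((N : ℝ) - 2)) ^ (((N : ℝ) - 2) / 4))
    (μ : ℝ) (hμ : 0 < μ)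
    (U : EuclideanSpace ℝ (Fin N) → ℝ)
    (hU : ∀ x, U x = αN * μ ^ Γ /
      (‖x‖ ^ βm * (μ ^ (4 * Γ / ((N : ℝ) - 2)) + ‖x‖ ^ (4 * Γ / ((N : ℝ) - 2))) ^ (((N : ℝ) - 2) / 2))) :
    ∀ x : EuclideanSpace ℝ (Fin N), x ≠ 0 →
      -lap U x - γ * U x / ‖x‖ ^ 2 = U x ^ (((N : ℝ) + 2) / ((N : ℝ) - 2)) := by
  have hn : (3 : ℝ) ≤ (N : ℝ) := by exact_mod_cast hN
  have hn2 : 0 < (N : ℝ) - 2 := by linarith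
  have hΓpos : 0 < Γ := by rw [hΓ]; exact Real.sqrt_pos.mpr (by linarith)
  have hΓsq : Γ ^ 2 = ((N : ℝ) - 2) ^ 2 / 4 - γ := by
    rw [hΓ, sq_sqrt (by linarith)]
  have hαpos : 0 < αN := by
    rw [hαN]
    apply Real.rpow_pos_of_pos
    have h1 : 0 < 4 * Γ ^ 2 * (N : ℝ) := by positivity
    positivity
  set c : ℝ := ((N : ℝ) - 2) / 2 with hc
  have hcpos : 0 < c := by positivity
  set qe : ℝ := 2 * Γ / ((N : ℝ) - 2) with hqe
  have hqepos : 0 < qe := by positivity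
  set m : ℝ := μ ^ (4 * Γ / ((N : ℝ) - 2)) with hm
  have hmpos : 0 < m := Real.rpow_pos_of_pos hμ _
  set C : ℝ := αN * μ ^ Γ with hC
  have hCpos : 0 < C := by
    have := Real.rpow_pos_of_pos hμ Γ
    positivity
  set P₀ : ℝ := -(βm / 2) with hP₀
  set F : ℝ → ℝ := fun s => C * Tfun m qe P₀ (-c) s with hF
  set F₁ : ℝ → ℝ := fun s => C * (P₀ * Tfun m qe (P₀ - 1) (-c) s
      + -c * qe * Tfun m qe (P₀ + qe - 1) (-c - 1) s) with hF₁def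
  set F₂ : ℝ → ℝ := fun s => C *
      (P₀ * ((P₀ - 1) * Tfun m qe (P₀ - 1 - 1) (-c) s
        + -c * qe * Tfun m qe (P₀ - 1 + qe - 1) (-c - 1) s)
      + -c * qe * ((P₀ + qe - 1) * Tfun m qe (P₀ + qe - 1 - 1) (-c - 1) s
        + (-c - 1) * qe * Tfun m qe (P₀ + qe - 1 + qe - 1) (-c - 1 - 1) s)) with hF₂def
  have hF₁ : ∀ s : ℝ, 0 < s → HasDerivAt F (F₁ s) s := by
    intro s hs
    exact (hasDerivAt_Tfun hmpos P₀ (-c) hs).const_mul C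
  have hF₂ : ∀ s : ℝ, 0 < s → HasDerivAt F₁ (F₂ s) s := by
    intro s hs
    exact (((hasDerivAt_Tfun hmpos (P₀ - 1) (-c) hs).const_mul P₀).add
      ((hasDerivAt_Tfun hmpos (P₀ + qe - 1) (-c - 1) hs).const_mul (-c * qe))).const_mul C
  have hUF : ∀ y : EuclideanSpace ℝ (Fin N), y ≠ 0 → U y = F (‖y‖ ^ 2) := by
    intro y hy
    have hr : 0 < ‖y‖ := norm_pos_iff.mpr hy
    rw [hU y, hF]
    simp only [Tfun]
    rw [← Real.rpow_natCast ‖y‖ 2, ← Real.rpow_mul hr.le, ← Real.rpow_mul hr.le]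
    push_cast
    rw [show (2 : ℝ) * P₀ = -βm by rw [hP₀]; ring,
      show (2 : ℝ) * qe = 4 * Γ / ((N : ℝ) - 2) by rw [hqe]; ring]
    rw [Real.rpow_neg hr.le]
    have hwpos : 0 < m + ‖y‖ ^ (4 * Γ / ((N : ℝ) - 2)) := by
      have := Real.rpow_pos_of_pos hr (4 * Γ / ((N : ℝ) - 2)); positivity
    rw [Real.rpow_neg hwpos.le, hc]
    field_simp
  intro x hx
  rw [lap_radial N F F₁ F₂ hF₁ hF₂ U hUF x hx, hUF x hx]
  have hrx : 0 < ‖x‖ := norm_pos_iff.mpr hx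
  set s : ℝ := ‖x‖ ^ 2 with hsdef
  have hs : 0 < s := by positivity
  set v : ℝ := s ^ qe with hv
  have hvpos : 0 < v := Real.rpow_pos_of_pos hs _
  set w : ℝ := m + v with hw
  have hwpos : 0 < w := by positivity
  have expand : ∀ p e : ℝ, Tfun m qe p e s = s ^ p * w ^ e := by
    intro p e
    simp only [Tfun, hw, hv]
  have hsexp : ∀ u u' : ℝ, u = u' → s ^ u = s ^ u' := fun u u' h => by rw [h]
  have hwexp : ∀ u u' : ℝ, u = u' → w ^ u = w ^ u' := fun u u' h => by rw [h]
  have estep : ∀ u : ℝ, s ^ u * s = s ^ (u + 1) := fun u => (Real.rpow_add_one hs.ne' u).symm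
  have estepv : ∀ u : ℝ, s ^ u * v = s ^ (u + qe) := fun u => by
    rw [hv, ← Real.rpow_add hs]
  have wstep : ∀ u : ℝ, w ^ u * w = w ^ (u + 1) := fun u => (Real.rpow_add_one hwpos.ne' u).symm
  have e1 : s ^ (P₀ - 1) = s ^ (P₀ - 2) * s := by
    rw [estep]; exact hsexp _ _ (by ring)
  have e2 : s ^ P₀ = s ^ (P₀ - 2) * s * s := by
    rw [estep, estep]; exact hsexp _ _ (by ring)
  have e3 : s ^ (P₀ - 1 + qe - 1) = s ^ (P₀ - 2) * v := by
    rw [estepv]; exact hsexp _ _ (by ring)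
  have e4 : s ^ (P₀ + qe - 1 - 1) = s ^ (P₀ - 2) * v := by
    rw [estepv]; exact hsexp _ _ (by ring)
  have e5 : s ^ (P₀ + qe - 1) = s ^ (P₀ - 2) * v * s := by
    rw [estepv, estep]; exact hsexp _ _ (by ring)
  have e6 : s ^ (P₀ + qe - 1 + qe - 1) = s ^ (P₀ - 2) * v * v := by
    rw [estepv, estepv]; exact hsexp _ _ (by ring)
  have f1 : w ^ (-c) = w ^ (-c - 2) * w * w := by
    rw [wstep, wstep]; exact hwexp _ _ (by ring)
  have f2 : w ^ (-c - 1) = w ^ (-c - 2) * w := by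
    rw [wstep]; exact hwexp _ _ (by ring)
  have hspos : 0 < s ^ P₀ := Real.rpow_pos_of_pos hs _
  have hwcpos : 0 < w ^ (-c) := Real.rpow_pos_of_pos hwpos _
  have hCp : C ^ (((N : ℝ) + 2) / ((N : ℝ) - 2)) = C * (4 * Γ ^ 2 * (N : ℝ) / ((N : ℝ) - 2) * m) := by
    have hp : ((N : ℝ) + 2) / ((N : ℝ) - 2) = 1 + 2 / c := by
      rw [hc]; field_simp; ring
    have hg1 : Γ * (2 / c) = 4 * Γ / ((N : ℝ) - 2) := by rw [hc]; field_simp; ring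
    have hg2 : ((N : ℝ) - 2) / 4 * (2 / c) = 1 := by rw [hc]; field_simp; ring
    rw [hp, Real.rpow_add hCpos, Real.rpow_one, hC]
    have h1 : (αN * μ ^ Γ) ^ (2 / c) = αN ^ (2 / c) * (μ ^ Γ) ^ (2 / c) :=
      Real.mul_rpow hαpos.le (Real.rpow_pos_of_pos hμ Γ).le
    rw [h1, ← Real.rpow_mul hμ.le, hg1, ← hm, hαN, ← Real.rpow_mul (by positivity), hg2,
      Real.rpow_one]
  have hexp1 : s ^ (P₀ * (((N : ℝ) + 2) / ((N : ℝ) - 2))) = s ^ (P₀ - 2) * v * s := by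
    rw [e5.symm]
    exact hsexp _ _ (by rw [hP₀, hβm, hqe, hc]; field_simp; ring)
  have hexp2 : w ^ ((-c) * (((N : ℝ) + 2) / ((N : ℝ) - 2))) = w ^ (-c - 2) := by
    exact hwexp _ _ (by rw [hc]; field_simp; ring)
  have hRHS : F s ^ (((N : ℝ) + 2) / ((N : ℝ) - 2))
      = (C * (4 * Γ ^ 2 * (N : ℝ) / ((N : ℝ) - 2) * m)) * (s ^ (P₀ - 2) * v * s * w ^ (-c - 2)) := by
    rw [hF]
    simp only [expand]
    rw [Real.mul_rpow hCpos.le (by positivity), Real.mul_rpow hspos.le hwcpos.le,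
      ← Real.rpow_mul hs.le, ← Real.rpow_mul hwpos.le, hCp, hexp1, hexp2]
  rw [hRHS, hF, hF₁def, hF₂def]
  simp only [expand]
  rw [e1, e2, e4, e5, e6, f1, f2]
  rw [e3]
  have hγ' : γ = ((N : ℝ) - 2) ^ 2 / 4 - Γ ^ 2 := by linarith [hΓsq]
  clear_value c qe m C P₀ F F₁ F₂ s v w
  clear hU hUF hF₁ hF₂ expand hsexp hwexp estep estepv wstep e1 e2 e3 e4 e5 e6 f1 f2
  clear hF hF₁def hF₂def hsdef hv hm hC hαN hΓ hCp hexp1 hexp2 hRHS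
  rw [hγ', hqe, hP₀, hβm, hc, hw]
  have hne : ((N : ℝ) - 2) ≠ 0 := ne_of_gt hn2
  field_simp
  ring
end

section
/- Let N ≥ 3, γ < (N-2)^2/4 and Γ, β_- as above. The function Z(x) = (1 - |x|^{4Γ/(N-2)}) / (|x|^{β_-} (1 + |x|^{4Γ/(N-2)})^{N/2}) solves the linearized equation -ΔZ - γZ/|x|² = ((N+2)/(N-2)) U^{4/(N-2)} Z on R^N \ {0}, where U(x) = α_N / (|x|^{β_-}(1+|x|^{4Γ/(N-2)})^{(N-2)/2}). -/
open Real Filter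

/-- Quadratic polynomial factor of the first radial derivative. -/
noncomputable def pOne (b c m s : ℝ) : ℝ :=
  -b + (-(c + m * c)) * s + (b - c + m * c) * s ^ 2

noncomputable def dpOne (b c m s : ℝ) : ℝ :=
  -(c + m * c) + 2 * (b - c + m * c) * s

noncomputable def pTwo (b c m s : ℝ) : ℝ :=
  -(b + 1) * (1 + s) * pOne b c m s - (m + 1) * c * s * pOne b c m s
    + c * s * (1 + s) * dpOne b c m s

/-- The radial profile of `Z` as a function of `u = ‖x‖²`. -/
noncomputable def gFun (b c m u : ℝ) : ℝ := (1 - u ^ c) / (u ^ b * (1 + u ^ c) ^ m)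

noncomputable def gFun1 (b c m u : ℝ) : ℝ :=
  u ^ (-b - 1) * (1 + u ^ c) ^ (-m - 1) * pOne b c m (u ^ c)

noncomputable def gFun2 (b c m u : ℝ) : ℝ :=
  u ^ (-b - 2) * (1 + u ^ c) ^ (-m - 2) * pTwo b c m (u ^ c)

lemma hasDerivAt_gFun (b c m u : ℝ) (hu : 0 < u) :
    HasDerivAt (fun u => gFun b c m u) (gFun1 b c m u) u := by
  have hu' : u ≠ 0 := hu.ne'
  have hs : (0:ℝ) < u ^ c := rpow_pos_of_pos hu c
  have h1s : (0:ℝ) < 1 + u ^ c := by linarith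
  have hB : (0:ℝ) < u ^ b := rpow_pos_of_pos hu b
  have hc : HasDerivAt (fun u : ℝ => u ^ c) (c * u ^ (c - 1)) u :=
    Real.hasDerivAt_rpow_const (Or.inl hu')
  have hnum : HasDerivAt (fun u : ℝ => 1 - u ^ c) (-(c * u ^ (c - 1))) u := hc.const_sub 1
  have hb : HasDerivAt (fun u : ℝ => u ^ b) (b * u ^ (b - 1)) u :=
    Real.hasDerivAt_rpow_const (Or.inl hu')
  have hpow : HasDerivAt (fun u : ℝ => (1 + u ^ c) ^ m)
      ((c * u ^ (c - 1)) * m * (1 + u ^ c) ^ (m - 1)) u :=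
    (hc.const_add 1).rpow_const (Or.inl h1s.ne')
  have hden := hb.mul hpow
  have hD : (0:ℝ) < u ^ b * (1 + u ^ c) ^ m := mul_pos hB (rpow_pos_of_pos h1s m)
  have h := hnum.div hden hD.ne'
  refine h.congr_deriv ?_
  symm
  simp only [Pi.mul_apply, Pi.div_apply]
  have e1 : u ^ (c - 1) = u ^ c / u := by rw [rpow_sub hu, rpow_one]
  have e2 : u ^ (b - 1) = u ^ b / u := by rw [rpow_sub hu, rpow_one]
  have e3 : u ^ (-b - 1) = (u ^ b * u)⁻¹ := by
    rw [show -b - 1 = -(b + 1) by ring, rpow_neg hu.le, rpow_add hu, rpow_one]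
  have e4 : (1 + u ^ c) ^ (m - 1) = (1 + u ^ c) ^ m / (1 + u ^ c) := by
    rw [rpow_sub h1s, rpow_one]
  have e5 : (1 + u ^ c) ^ (-m - 1) = ((1 + u ^ c) ^ m * (1 + u ^ c))⁻¹ := by
    rw [show -m - 1 = -(m + 1) by ring, rpow_neg h1s.le, rpow_add h1s, rpow_one]
  rw [gFun1, pOne, e1, e2, e3, e4, e5]
  have hT : (0:ℝ) < (1 + u ^ c) ^ m := rpow_pos_of_pos h1s m
  field_simp
  ring

lemma hasDerivAt_gFun1 (b c m u : ℝ) (hu : 0 < u) :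
    HasDerivAt (fun u => gFun1 b c m u) (gFun2 b c m u) u := by
  have hu' : u ≠ 0 := hu.ne'
  have hs : (0:ℝ) < u ^ c := rpow_pos_of_pos hu c
  have h1s : (0:ℝ) < 1 + u ^ c := by linarith
  have hc : HasDerivAt (fun u : ℝ => u ^ c) (c * u ^ (c - 1)) u :=
    Real.hasDerivAt_rpow_const (Or.inl hu')
  have h1 : HasDerivAt (fun u : ℝ => u ^ (-b - 1)) ((-b - 1) * u ^ (-b - 1 - 1)) u :=
    Real.hasDerivAt_rpow_const (Or.inl hu')
  have h2 : HasDerivAt (fun u : ℝ => (1 + u ^ c) ^ (-m - 1))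
      ((c * u ^ (c - 1)) * (-m - 1) * (1 + u ^ c) ^ (-m - 1 - 1)) u :=
    (hc.const_add 1).rpow_const (Or.inl h1s.ne')
  have hP : HasDerivAt (fun s : ℝ => pOne b c m s) (dpOne b c m (u ^ c)) (u ^ c) := by
    have h := (((hasDerivAt_id (u ^ c)).const_mul (-(c + m * c))).const_add (-b)).add
      ((hasDerivAt_pow 2 (u ^ c)).const_mul (b - c + m * c))
    simp only [pOne, dpOne, id_eq]
    refine h.congr_deriv ?_
    symm
    simp; ring
  have h3 : HasDerivAt (fun u : ℝ => pOne b c m (u ^ c))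
      (dpOne b c m (u ^ c) * (c * u ^ (c - 1))) u := by
    have := hP.comp u hc
    exact this
  have h := (h1.mul h2).mul h3
  refine h.congr_deriv ?_
  symm
  simp only [Pi.mul_apply, Pi.div_apply]
  have e1 : u ^ (c - 1) = u ^ c / u := by rw [rpow_sub hu, rpow_one]
  have e3 : u ^ (-b - 1) = (u ^ b * u)⁻¹ := by
    rw [show -b - 1 = -(b + 1) by ring, rpow_neg hu.le, rpow_add hu, rpow_one]
  have e3' : u ^ (-b - 1 - 1) = (u ^ b * (u * u))⁻¹ := by
    rw [show -b - 1 - 1 = -(b + 1 + 1) by ring, rpow_neg hu.le, rpow_add hu, rpow_add hu,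
      rpow_one]
    ring_nf
  have e3'' : u ^ (-b - 2) = (u ^ b * (u * u))⁻¹ := by
    rw [show -b - 2 = -(b + 1 + 1) by ring, rpow_neg hu.le, rpow_add hu, rpow_add hu, rpow_one]
    ring_nf
  have e5 : (1 + u ^ c) ^ (-m - 1) = ((1 + u ^ c) ^ m * (1 + u ^ c))⁻¹ := by
    rw [show -m - 1 = -(m + 1) by ring, rpow_neg h1s.le, rpow_add h1s, rpow_one]
  have e5' : (1 + u ^ c) ^ (-m - 1 - 1) =
      ((1 + u ^ c) ^ m * ((1 + u ^ c) * (1 + u ^ c)))⁻¹ := by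
    rw [show -m - 1 - 1 = -(m + 1 + 1) by ring, rpow_neg h1s.le, rpow_add h1s, rpow_add h1s,
      rpow_one]
    ring_nf
  have e5'' : (1 + u ^ c) ^ (-m - 2) =
      ((1 + u ^ c) ^ m * ((1 + u ^ c) * (1 + u ^ c)))⁻¹ := by
    rw [show -m - 2 = -(m + 1 + 1) by ring, rpow_neg h1s.le, rpow_add h1s, rpow_add h1s,
      rpow_one]
    ring_nf
  have hB : (0:ℝ) < u ^ b := rpow_pos_of_pos hu b
  have hT : (0:ℝ) < (1 + u ^ c) ^ m := rpow_pos_of_pos h1s m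
  rw [gFun2, pTwo, pOne, dpOne, e1, e3, e3', e3'', e5, e5', e5'']
  field_simp
  ring

lemma iteratedDeriv_two' (f : ℝ → ℝ) : iteratedDeriv 2 f = deriv (deriv f) := by
  have h : (2:ℕ) = 1 + 1 := rfl
  rw [h, iteratedDeriv_succ, iteratedDeriv_one]

lemma lap_radial_s2 {N : ℕ} (g g1 g2 : ℝ → ℝ)
    (hd1 : ∀ u, 0 < u → HasDerivAt g (g1 u) u)
    (hd2 : ∀ u, 0 < u → HasDerivAt g1 (g2 u) u)
    (f : EuclideanSpace ℝ (Fin N) → ℝ)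
    (hf : ∀ y : EuclideanSpace ℝ (Fin N), y ≠ 0 → f y = g (‖y‖ ^ 2))
    (x : EuclideanSpace ℝ (Fin N)) (hx : x ≠ 0) :
    lap f x = 4 * ‖x‖ ^ 2 * g2 (‖x‖ ^ 2) + 2 * (N : ℝ) * g1 (‖x‖ ^ 2) := by
  have hr2 : (0:ℝ) < ‖x‖ ^ 2 := pow_pos (norm_pos_iff.mpr hx) 2
  have key : ∀ i : Fin N,
      iteratedDeriv 2 (fun t : ℝ => f (x + t • EuclideanSpace.single i (1 : ℝ))) 0
        = 4 * g2 (‖x‖ ^ 2) * (x i) ^ 2 + 2 * g1 (‖x‖ ^ 2) := by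
    intro i
    set E := EuclideanSpace.single i (1 : ℝ) with hE
    set q : ℝ → ℝ := fun t => ‖x‖ ^ 2 + 2 * x i * t + t ^ 2 with hqdef
    have hkey : ∀ t : ℝ, ‖x + t • E‖ ^ 2 = q t := by
      intro t
      have h1 : (inner ℝ x (t • E) : ℝ) = t * x i := by
        rw [real_inner_smul_right, hE, EuclideanSpace.inner_single_right]
        simp
      rw [norm_add_sq_real, h1, norm_smul]
      simp [hE, EuclideanSpace.norm_single, mul_pow, sq_abs, hqdef]
      ring
    have hqpos : ∀ t : ℝ, x + t • E ≠ 0 → 0 < q t := by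
      intro t ht
      rw [← hkey]
      exact pow_pos (norm_pos_iff.mpr ht) 2
    have hopen : IsOpen {t : ℝ | x + t • E ≠ 0} := by
      have : Continuous fun t : ℝ => x + t • E := by continuity
      exact isOpen_compl_singleton.preimage this
    have h0S : x + (0:ℝ) • E ≠ 0 := by simpa using hx
    have hq : ∀ t : ℝ, HasDerivAt q (2 * x i + 2 * t) t := by
      intro t
      have h := (((hasDerivAt_id t).const_mul (2 * x i)).const_add (‖x‖ ^ 2)).add
        (hasDerivAt_pow 2 t)
      simp at h
      exact h
    have step1 : ∀ t : ℝ, x + t • E ≠ 0 →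
        HasDerivAt (fun t => f (x + t • E)) (g1 (q t) * (2 * x i + 2 * t)) t := by
      intro t ht
      have hcomp : HasDerivAt (g ∘ q) (g1 (q t) * (2 * x i + 2 * t)) t :=
        (hd1 (q t) (hqpos t ht)).comp t (hq t)
      refine hcomp.congr_of_eventuallyEq ?_
      filter_upwards [hopen.mem_nhds ht] with t' ht'
      rw [hf _ ht', hkey t']
      rfl
    have ev : ∀ᶠ t in nhds (0:ℝ),
        deriv (fun t => f (x + t • E)) t = g1 (q t) * (2 * x i + 2 * t) := by
      filter_upwards [hopen.mem_nhds h0S] with t ht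
      exact (step1 t ht).deriv
    have hq0 : q 0 = ‖x‖ ^ 2 := by simp [hqdef]
    have step2 : HasDerivAt (fun t => g1 (q t) * (2 * x i + 2 * t))
        (4 * g2 (‖x‖ ^ 2) * (x i) ^ 2 + 2 * g1 (‖x‖ ^ 2)) 0 := by
      have A : HasDerivAt (g1 ∘ q) (g2 (q 0) * (2 * x i + 2 * 0)) 0 :=
        (hd2 (q 0) (hqpos 0 h0S)).comp 0 (hq 0)
      have B : HasDerivAt (fun t : ℝ => 2 * x i + 2 * t) 2 0 := by
        have := ((hasDerivAt_id (0:ℝ)).const_mul 2).const_add (2 * x i)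
        simpa using this
      have hAB := A.mul B
      refine hAB.congr_deriv ?_
      symm
      simp [Function.comp, hq0]
      ring
    have step3 : HasDerivAt (deriv (fun t : ℝ => f (x + t • E)))
        (4 * g2 (‖x‖ ^ 2) * (x i) ^ 2 + 2 * g1 (‖x‖ ^ 2)) 0 :=
      step2.congr_of_eventuallyEq ev
    rw [iteratedDeriv_two', step3.deriv]
  unfold lap
  rw [Finset.sum_congr rfl (fun i _ => key i)]
  rw [Finset.sum_add_distrib, Finset.sum_const, ← Finset.mul_sum]
  have hsum : ∑ i : Fin N, (x i) ^ 2 = ‖x‖ ^ 2 := by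
    rw [EuclideanSpace.norm_eq, Real.sq_sqrt (by positivity)]
    simp [sq_abs]
  rw [hsum]
  simp
  ring

lemma final_ident (n γ Γ b c m u s B S : ℝ)
    (hn : 3 ≤ n) (hΓsq : Γ ^ 2 = (n - 2) ^ 2 / 4 - γ)
    (hb : b = ((n - 2) / 2 - Γ) / 2) (hc : c = 2 * Γ / (n - 2)) (hm : m = n / 2)
    (hu : 0 < u) (hs : 0 < s) (hB : 0 < B) (hS : 0 < S) :
    -(4 * u * ((B * (u * u))⁻¹ * (S * ((1 + s) * (1 + s)))⁻¹ * pTwo b c m s)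
        + 2 * n * ((B * u)⁻¹ * (S * (1 + s))⁻¹ * pOne b c m s))
      - γ * ((1 - s) / (B * S)) / u
    = (n + 2) / (n - 2) * (4 * Γ ^ 2 * n / (n - 2) * (s / (u * (1 + s) ^ 2)))
        * ((1 - s) / (B * S)) := by
  have hγ' : γ = (n - 2) ^ 2 / 4 - Γ ^ 2 := by linarith
  have hn2 : n - 2 ≠ 0 := by intro h; nlinarith
  have h1s : (0:ℝ) < 1 + s := by linarith
  subst hγ' hb hc hm
  simp only [pOne, pTwo, dpOne]
  field_simp
  ring

lemma rpow_two_mul (r : ℝ) (hr : 0 ≤ r) (e : ℝ) : (r ^ 2) ^ e = r ^ (2 * e) := by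
  rw [← Real.rpow_natCast r 2, ← Real.rpow_mul hr]
  norm_num

lemma rpow_nat_two (r : ℝ) (hr : 0 ≤ r) : r ^ (2:ℝ) = r ^ 2 := by
  rw [← Real.rpow_natCast r 2]
  norm_num

lemma rpow_negsub1 (u e : ℝ) (hu : 0 < u) : u ^ (-e - 1) = (u ^ e * u)⁻¹ := by
  rw [show -e - 1 = -(e + 1) by ring, Real.rpow_neg hu.le, Real.rpow_add hu, Real.rpow_one]

lemma rpow_negsub2 (u e : ℝ) (hu : 0 < u) : u ^ (-e - 2) = (u ^ e * (u * u))⁻¹ := by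
  rw [show -e - 2 = -(e + 1 + 1) by ring, Real.rpow_neg hu.le, Real.rpow_add hu,
    Real.rpow_add hu, Real.rpow_one]
  ring_nf

/-- The function `Z` solves the linearized equation
`-ΔZ - γZ/|x|² = ((N+2)/(N-2)) U^{4/(N-2)} Z` on `ℝ^N \ {0}`. -/
theorem linearized_solution (N : ℕ) (hN : 3 ≤ N) (γ Γ βm αN : ℝ)
    (hγ : γ < ((N : ℝ) - 2) ^ 2 / 4)
    (hΓ : Γ = Real.sqrt (((N : ℝ) - 2) ^ 2 / 4 - γ))
    (hβm : βm = ((N : ℝ) - 2) / 2 - Γ)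
    (hαN : αN = (4 * Γ ^ 2 * (N : ℝ) / ((N : ℝ) - 2)) ^ (((N : ℝ) - 2) / 4))
    (U Z : EuclideanSpace ℝ (Fin N) → ℝ)
    (hU : ∀ x, U x = αN /
      (‖x‖ ^ βm * (1 + ‖x‖ ^ (4 * Γ / ((N : ℝ) - 2))) ^ (((N : ℝ) - 2) / 2)))
    (hZ : ∀ x, Z x = (1 - ‖x‖ ^ (4 * Γ / ((N : ℝ) - 2))) /
      (‖x‖ ^ βm * (1 + ‖x‖ ^ (4 * Γ / ((N : ℝ) - 2))) ^ ((N : ℝ) / 2))) :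
    ∀ x : EuclideanSpace ℝ (Fin N), x ≠ 0 →
      -lap Z x - γ * Z x / ‖x‖ ^ 2
        = ((N : ℝ) + 2) / ((N : ℝ) - 2) * U x ^ (4 / ((N : ℝ) - 2)) * Z x := by
  intro x hx
  set n := ((N : ℝ)) with hn
  have hn3 : (3:ℝ) ≤ n := by rw [hn]; exact_mod_cast hN
  have hn2 : (0:ℝ) < n - 2 := by linarith
  have hΓpos : 0 < Γ := by rw [hΓ]; exact Real.sqrt_pos.mpr (by linarith)
  have hΓsq : Γ ^ 2 = (n - 2) ^ 2 / 4 - γ := by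
    rw [hΓ]; exact Real.sq_sqrt (by linarith)
  have hr : (0:ℝ) < ‖x‖ := norm_pos_iff.mpr hx
  have hu2 : (0:ℝ) < ‖x‖ ^ 2 := pow_pos hr 2
  -- the profile parameters
  set b := βm / 2 with hbdef
  set c := 2 * Γ / (n - 2) with hcdef
  set m := n / 2 with hmdef
  have hcc : 2 * c = 4 * Γ / (n - 2) := by rw [hcdef]; ring
  -- Z is radial with profile gFun
  have hZ' : ∀ y : EuclideanSpace ℝ (Fin N), y ≠ 0 → Z y = gFun b c m (‖y‖ ^ 2) := by
    intro y _
    rw [hZ y]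
    simp only [gFun]
    rw [rpow_two_mul ‖y‖ (norm_nonneg y) c, rpow_two_mul ‖y‖ (norm_nonneg y) b, hcc,
      show 2 * b = βm by rw [hbdef]; ring]
  have hlap := lap_radial_s2 (fun u => gFun b c m u) (fun u => gFun1 b c m u)
    (fun u => gFun2 b c m u) (fun u hu => hasDerivAt_gFun b c m u hu)
    (fun u hu => hasDerivAt_gFun1 b c m u hu) Z hZ' x hx
  beta_reduce at hlap
  -- abbreviations
  set st := ‖x‖ ^ (4 * Γ / (n - 2)) with hstdef
  have hst : (‖x‖ ^ 2) ^ c = st := by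
    rw [rpow_two_mul ‖x‖ (norm_nonneg x) c, hcc]
  have hstpos : (0:ℝ) < st := rpow_pos_of_pos hr _
  have h1st : (0:ℝ) < 1 + st := by linarith
  set B := (‖x‖ ^ 2) ^ b with hBdef
  set S := (1 + st) ^ m with hSdef
  have hBpos : (0:ℝ) < B := rpow_pos_of_pos hu2 b
  have hSpos : (0:ℝ) < S := rpow_pos_of_pos h1st m
  have hg : gFun b c m (‖x‖ ^ 2) = (1 - st) / (B * S) := by
    simp only [gFun]; rw [hst]
  have hg1 : gFun1 b c m (‖x‖ ^ 2)
      = (B * ‖x‖ ^ 2)⁻¹ * (S * (1 + st))⁻¹ * pOne b c m st := by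
    simp only [gFun1]
    rw [hst, rpow_negsub1 _ b hu2, rpow_negsub1 _ m h1st]
  have hg2 : gFun2 b c m (‖x‖ ^ 2)
      = (B * (‖x‖ ^ 2 * ‖x‖ ^ 2))⁻¹ * (S * ((1 + st) * (1 + st)))⁻¹ * pTwo b c m st := by
    simp only [gFun2]
    rw [hst, rpow_negsub2 _ b hu2, rpow_negsub2 _ m h1st]
  -- the power of U
  have hbase : (0:ℝ) < 4 * Γ ^ 2 * n / (n - 2) :=
    div_pos (mul_pos (by positivity) (by linarith)) hn2
  have hαpos : 0 < αN := by rw [hαN]; exact rpow_pos_of_pos hbase _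
  have hUx : U x ^ (4 / (n - 2)) = 4 * Γ ^ 2 * n / (n - 2) *
      (st / (‖x‖ ^ 2 * (1 + st) ^ 2)) := by
    have h1 : αN ^ (4 / (n - 2)) = 4 * Γ ^ 2 * n / (n - 2) := by
      rw [hαN, ← Real.rpow_mul hbase.le,
        show (n - 2) / 4 * (4 / (n - 2)) = 1 by field_simp, Real.rpow_one]
    have h2 : (‖x‖ ^ βm) ^ (4 / (n - 2)) = ‖x‖ ^ 2 / st := by
      rw [hstdef, ← Real.rpow_mul (norm_nonneg x),
        show βm * (4 / (n - 2)) = 2 - 4 * Γ / (n - 2) by rw [hβm]; field_simp; ring,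
        Real.rpow_sub hr, rpow_nat_two _ (norm_nonneg x)]
    have h3 : ((1 + st) ^ ((n - 2) / 2)) ^ (4 / (n - 2)) = (1 + st) ^ 2 := by
      rw [← Real.rpow_mul h1st.le,
        show (n - 2) / 2 * (4 / (n - 2)) = 2 by field_simp; ring,
        rpow_nat_two _ h1st.le]
    rw [hU x, Real.div_rpow hαpos.le (by positivity),
      Real.mul_rpow (rpow_nonneg (norm_nonneg x) _) (rpow_nonneg h1st.le _), h1, h2, h3]
    have e1 : st ≠ 0 := hstpos.ne'
    have e2 : (1 + st) ≠ 0 := h1st.ne'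
    have e3 : ‖x‖ ≠ 0 := hr.ne'
    have e4 : n - 2 ≠ 0 := hn2.ne'
    field_simp
  rw [hlap, hZ' x hx, hg, hg1, hg2, hUx]
  linear_combination final_ident n γ Γ b c m (‖x‖ ^ 2) st B S hn3 hΓsq
    (by rw [hbdef, hβm]) hcdef hmdef hu2 hstpos hBpos hSpos
end

section
/- Let u ∈ H^1_0(B) be a radial solution of -Δu - γu/|x|² - λu = |u|^{4/(N-2)}u in the unit ball B of R^N with 0 < γ < (N-2)^2/4 (so Γ = √((N-2)^2/4 - γ) > 0). Then the function v(r) = ((N-2)/(2Γ))^{(N-2)/2} r^{((N-2)/2)((N-2)/(2Γ) - 1)} u(r^{(N-2)/(2Γ)}) is a radial solution of -Δv = |v|^{4/(N-2)}v + ε|x|^α v in B \ {0} with v = 0 on ∂B, where α = (N-2)/Γ - 2 and ε = ((N-2)/(2Γ))² λ. -/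
/-- The change of variables `v(r) = ((N-2)/(2Γ))^{(N-2)/2} r^{((N-2)/2)((N-2)/(2Γ)-1)}
u(r^{(N-2)/(2Γ)})` turns a radial solution of `-Δu - γu/|x|² - λu = |u|^{4/(N-2)}u` in the
unit ball into a radial solution of `-Δv = |v|^{4/(N-2)}v + ε|x|^α v`,
`α = (N-2)/Γ - 2`, `ε = ((N-2)/(2Γ))² λ`, with `v = 0` on the boundary. -/
theorem radial_change_of_variables (N : ℕ) (hN : 3 ≤ N) (γ Γ lam : ℝ)
    (hγ0 : 0 < γ) (hγ : γ < ((N : ℝ) - 2) ^ 2 / 4)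
    (hΓ : Γ = Real.sqrt (((N : ℝ) - 2) ^ 2 / 4 - γ))
    (u v : ℝ → ℝ)
    (hu2 : ContDiffOn ℝ 2 u (Set.Ioo 0 1))
    (hueq : ∀ r ∈ Set.Ioo (0 : ℝ) 1,
      -(deriv (deriv u) r) - ((N : ℝ) - 1) / r * deriv u r - γ * u r / r ^ 2 - lam * u r
        = |u r| ^ (4 / ((N : ℝ) - 2)) * u r)
    (hu1 : u 1 = 0)
    (hv : ∀ r : ℝ, 0 < r → v r =
      (((N : ℝ) - 2) / (2 * Γ)) ^ (((N : ℝ) - 2) / 2) *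
        r ^ ((((N : ℝ) - 2) / 2) * (((N : ℝ) - 2) / (2 * Γ) - 1)) *
        u (r ^ (((N : ℝ) - 2) / (2 * Γ)))) :
    (∀ r ∈ Set.Ioo (0 : ℝ) 1,
      -(deriv (deriv v) r) - ((N : ℝ) - 1) / r * deriv v r
        = |v r| ^ (4 / ((N : ℝ) - 2)) * v r
          + ((((N : ℝ) - 2) / (2 * Γ)) ^ 2 * lam) * r ^ (((N : ℝ) - 2) / Γ - 2) * v r)
    ∧ v 1 = 0 := by
  have hN' : (3 : ℝ) ≤ (N : ℝ) := by exact_mod_cast hN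
  have hn2 : (0 : ℝ) < (N : ℝ) - 2 := by linarith
  have hΓpos : 0 < Γ := by
    rw [hΓ]; exact Real.sqrt_pos.2 (by linarith)
  have hΓsq : Γ ^ 2 = ((N : ℝ) - 2) ^ 2 / 4 - γ := by
    rw [hΓ, Real.sq_sqrt (by linarith)]
  set k := ((N : ℝ) - 2) / (2 * Γ) with hkdef
  set C := k ^ (((N : ℝ) - 2) / 2) with hCdef
  set β := (((N : ℝ) - 2) / 2) * (k - 1) with hβdef
  set p := 4 / ((N : ℝ) - 2) with hpdef
  have hkpos : 0 < k := by
    rw [hkdef]; positivity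
  have hCpos : 0 < C := Real.rpow_pos_of_pos hkpos _
  have hkG : k * Γ = ((N : ℝ) - 2) / 2 := by
    rw [hkdef]; field_simp
  have hkey1 : β ^ 2 + ((N : ℝ) - 2) * β = k ^ 2 * γ := by
    rw [hβdef]
    linear_combination (-(k ^ 2)) * hΓsq + (k * Γ + ((N : ℝ) - 2) / 2) * hkG
  have hkey2 : k * (2 * β + k + ((N : ℝ) - 2)) = k ^ 2 * ((N : ℝ) - 1) := by
    rw [hβdef]; ring
  -- differentiability of u
  have hud : ∀ s ∈ Set.Ioo (0 : ℝ) 1, HasDerivAt u (deriv u s) s := fun s hs =>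
    ((hu2.differentiableOn (by norm_num)).differentiableAt
      (isOpen_Ioo.mem_nhds hs)).hasDerivAt
  have hudd : ∀ s ∈ Set.Ioo (0 : ℝ) 1, HasDerivAt (deriv u) (deriv (deriv u) s) s := fun s hs =>
    ((((hu2.deriv_of_isOpen (m := 1) isOpen_Ioo (by norm_num)).differentiableOn
      (by norm_num))).differentiableAt (isOpen_Ioo.mem_nhds hs)).hasDerivAt
  -- first derivative of the model function
  have hg1 : ∀ r ∈ Set.Ioo (0 : ℝ) 1,
      HasDerivAt (fun x : ℝ => C * x ^ β * u (x ^ k))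
        (C * (β * r ^ (β - 1) * u (r ^ k) + k * r ^ (β + k - 1) * deriv u (r ^ k))) r := by
    intro r hr
    have hr0 : 0 < r := hr.1
    have hs : r ^ k ∈ Set.Ioo (0 : ℝ) 1 :=
      ⟨Real.rpow_pos_of_pos hr0 k, Real.rpow_lt_one hr0.le hr.2 hkpos⟩
    have h2 : HasDerivAt (fun x : ℝ => x ^ k) (k * r ^ (k - 1)) r :=
      Real.hasDerivAt_rpow_const (Or.inl hr0.ne')
    have h4 : HasDerivAt (fun x : ℝ => u (x ^ k)) (deriv u (r ^ k) * (k * r ^ (k - 1))) r :=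
      (hud _ hs).comp r h2
    have h1 : HasDerivAt (fun x : ℝ => C * x ^ β) (C * (β * r ^ (β - 1))) r :=
      (Real.hasDerivAt_rpow_const (Or.inl hr0.ne')).const_mul C
    have h5 := h1.mul h4
    refine h5.congr_deriv ?_
    rw [show β + k - 1 = β + (k - 1) by ring, Real.rpow_add hr0]
    ring
  -- second derivative
  have hg2 : ∀ r ∈ Set.Ioo (0 : ℝ) 1,
      HasDerivAt (fun x : ℝ =>
          C * (β * x ^ (β - 1) * u (x ^ k) + k * x ^ (β + k - 1) * deriv u (x ^ k)))
        (C * (β * (β - 1) * r ^ (β - 2) * u (r ^ k)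
            + (β * k + k * (β + k - 1)) * r ^ (β + k - 2) * deriv u (r ^ k)
            + k * k * r ^ (β + 2 * k - 2) * deriv (deriv u) (r ^ k))) r := by
    intro r hr
    have hr0 : 0 < r := hr.1
    have hs : r ^ k ∈ Set.Ioo (0 : ℝ) 1 :=
      ⟨Real.rpow_pos_of_pos hr0 k, Real.rpow_lt_one hr0.le hr.2 hkpos⟩
    have hpow : ∀ e : ℝ, HasDerivAt (fun x : ℝ => x ^ e) (e * r ^ (e - 1)) r := fun e =>
      Real.hasDerivAt_rpow_const (Or.inl hr0.ne')
    have h2 : HasDerivAt (fun x : ℝ => x ^ k) (k * r ^ (k - 1)) r := hpow k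
    have h4 : HasDerivAt (fun x : ℝ => u (x ^ k)) (deriv u (r ^ k) * (k * r ^ (k - 1))) r :=
      (hud _ hs).comp r h2
    have h4' : HasDerivAt (fun x : ℝ => deriv u (x ^ k))
        (deriv (deriv u) (r ^ k) * (k * r ^ (k - 1))) r :=
      by have := (hudd _ hs).comp r h2; exact this
    have hT1 := (((hpow (β - 1)).const_mul β).mul h4)
    have hT2 := (((hpow (β + k - 1)).const_mul k).mul h4')
    have h5 := (hT1.add hT2).const_mul C
    refine h5.congr_deriv ?_
    have e1 : r ^ (β + k - 2) = r ^ (β - 1) * r ^ (k - 1) := by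
      rw [show β + k - 2 = (β - 1) + (k - 1) by ring, Real.rpow_add hr0]
    have e2 : r ^ (β + 2 * k - 2) = r ^ (β + k - 1) * r ^ (k - 1) := by
      rw [show β + 2 * k - 2 = (β + k - 1) + (k - 1) by ring, Real.rpow_add hr0]
    rw [show β - 1 - 1 = β - 2 by ring, show β + k - 1 - 1 = β + k - 2 by ring, e1, e2]
    ring
  constructor
  · intro r hr
    have hr0 : 0 < r := hr.1
    have hsIoo : r ^ k ∈ Set.Ioo (0 : ℝ) 1 :=
      ⟨Real.rpow_pos_of_pos hr0 k, Real.rpow_lt_one hr0.le hr.2 hkpos⟩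
    -- transfer derivatives from the model function to v
    have hev : v =ᶠ[nhds r] fun x : ℝ => C * x ^ β * u (x ^ k) := by
      filter_upwards [Ioi_mem_nhds hr0] with x hx
      exact hv x hx
    have hdv : HasDerivAt v
        (C * (β * r ^ (β - 1) * u (r ^ k) + k * r ^ (β + k - 1) * deriv u (r ^ k))) r :=
      (hg1 r hr).congr_of_eventuallyEq hev
    have hderiv1 : deriv v r
        = C * (β * r ^ (β - 1) * u (r ^ k) + k * r ^ (β + k - 1) * deriv u (r ^ k)) :=
      hdv.deriv
    have hev2 : deriv v =ᶠ[nhds r] fun x : ℝ =>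
        C * (β * x ^ (β - 1) * u (x ^ k) + k * x ^ (β + k - 1) * deriv u (x ^ k)) := by
      filter_upwards [isOpen_Ioo.mem_nhds hr] with x hx
      have hevx : v =ᶠ[nhds x] fun y : ℝ => C * y ^ β * u (y ^ k) := by
        filter_upwards [Ioi_mem_nhds hx.1] with y hy
        exact hv y hy
      exact ((hg1 x hx).congr_of_eventuallyEq hevx).deriv
    have hddv : HasDerivAt (deriv v)
        (C * (β * (β - 1) * r ^ (β - 2) * u (r ^ k)
            + (β * k + k * (β + k - 1)) * r ^ (β + k - 2) * deriv u (r ^ k)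
            + k * k * r ^ (β + 2 * k - 2) * deriv (deriv u) (r ^ k))) r :=
      (hg2 r hr).congr_of_eventuallyEq hev2
    have hderiv2 := hddv.deriv
    rw [hderiv2, hderiv1, hv r hr0]
    set s := r ^ k with hsdef
    have hspos : 0 < s := hsIoo.1
    -- exponent identity
    have hexp : ((N : ℝ) - 2) / Γ - 2 = 2 * k - 2 := by
      rw [hkdef]; field_simp
    rw [hexp]
    -- power identities
    have hA1 : r ^ (β - 1) = r ^ (β - 2) * r := by
      rw [show β - 1 = (β - 2) + 1 by ring, Real.rpow_add hr0, Real.rpow_one]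
    have hA2 : r ^ β = r ^ (β - 2) * (r * r) := by
      rw [show β = (β - 2) + 1 + 1 by ring, Real.rpow_add hr0, Real.rpow_add hr0,
        Real.rpow_one]
      ring
    have hA3 : r ^ (β + k - 1) = r ^ (β - 2) * s * r := by
      rw [show β + k - 1 = (β - 2) + k + 1 by ring, Real.rpow_add hr0, Real.rpow_add hr0,
        Real.rpow_one, hsdef]
    have hA5 : r ^ (β + k - 2) = r ^ (β - 2) * s := by
      rw [show β + k - 2 = (β - 2) + k by ring, Real.rpow_add hr0, hsdef]
    have hA4 : r ^ (β + 2 * k - 2) = r ^ (β - 2) * (s * s) := by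
      rw [show β + 2 * k - 2 = (β - 2) + k + k by ring, Real.rpow_add hr0, Real.rpow_add hr0,
        hsdef]
      ring
    have hr2 : r ^ (2 : ℝ) = r * r := by
      rw [show (2 : ℝ) = ((2 : ℕ) : ℝ) by norm_num, Real.rpow_natCast]; ring
    have hA6 : r ^ (2 * k - 2) * (r * r) = s * s := by
      rw [show 2 * k - 2 = k + k - 2 by ring, Real.rpow_sub hr0, Real.rpow_add hr0, hr2,
        hsdef]
      field_simp
    -- the absolute-value term
    have hCA : 0 < C * r ^ β := mul_pos hCpos (Real.rpow_pos_of_pos hr0 β)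
    have hCp : C ^ p = k ^ 2 := by
      rw [hCdef, ← Real.rpow_mul hkpos.le,
        show (((N : ℝ) - 2) / 2) * p = 2 by rw [hpdef]; field_simp; ring,
        show (2 : ℝ) = ((2 : ℕ) : ℝ) by norm_num, Real.rpow_natCast]
    have hrp : (r ^ β) ^ p = r ^ (2 * k - 2) := by
      rw [← Real.rpow_mul hr0.le]
      congr 1
      rw [hβdef, hpdef]
      field_simp
      ring
    have habs : |C * r ^ β * u s| ^ p * (C * r ^ β * u s)
        = k ^ 2 * r ^ (2 * k - 2) * (C * r ^ β) * (|u s| ^ p * u s) := by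
      rw [abs_mul, abs_of_pos hCA, Real.mul_rpow hCA.le (abs_nonneg _),
        Real.mul_rpow hCpos.le (Real.rpow_pos_of_pos hr0 β).le, hCp, hrp]
      ring
    rw [habs]
    -- polynomial form of the equation for u at s
    have hpoly : (s * s) * (|u s| ^ p * u s)
        = -((s * s) * deriv (deriv u) s) - ((N : ℝ) - 1) * s * deriv u s - γ * u s
          - lam * ((s * s) * u s) := by
      rw [← hueq s hsIoo]
      field_simp
    -- the (N-1)/r term
    have hdiv : ((N : ℝ) - 1) / r * (C * (β * r ^ (β - 1) * u s + k * r ^ (β + k - 1) * deriv u s))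
        = C * (((N : ℝ) - 1) * β * r ^ (β - 2) * u s
            + ((N : ℝ) - 1) * k * (r ^ (β - 2) * s) * deriv u s) := by
      rw [hA1, hA3]
      field_simp
    rw [hdiv, hA2, hA4, hA5]
    linear_combination
      (-(k ^ 2 * C * r ^ (β - 2)) * (|u s| ^ p * u s + lam * u s)) * hA6
      + (-(k ^ 2 * C * r ^ (β - 2))) * hpoly
      + (-(C * r ^ (β - 2) * u s)) * hkey1
      + (-(C * r ^ (β - 2) * s * deriv u s)) * hkey2
  · rw [hv 1 one_pos, Real.one_rpow, Real.one_rpow, hu1, mul_zero]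
end

section
/- Let v be a C² radial solution on (0,1) of -(r^{N-1}v')' = r^{N-1}(|v|^{4/(N-2)}v + ε r^α v) with α > -2, ε > 0, v(0) > 0, v(1) = 0 and lim_{r→0} r^{N-1}v'(r) = 0, and suppose v is nontrivial. Then there exist an integer k ≥ 1 and points 0 = R_0 = r_1 < R_1 < r_2 < ... < R_{k-1} < r_k < R_k = r_{k+1} = 1 such that for all j = 1,...,k: (-1)^{j-1} v > 0 on (R_{j-1}, R_j) with v(R_j) = 0, and (-1)^j v' > 0 on (r_j, r_{j+1}) with v'(r_j) = 0 (with the convention v'(0) = 0). In particular v has finitely many nodal regions. -/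
open Set Filter Real
set_option maxHeartbeats 2000000


lemma hasDerivAt_abs_rpow_mul {q : ℝ} (hq : 0 < q) (x : ℝ) :
    HasDerivAt (fun y : ℝ => |y| ^ q * y) ((q + 1) * |x| ^ q) x := by
  rcases lt_trichotomy x 0 with hx | hx | hx
  · have h1 : HasDerivAt (fun y : ℝ => (-y) ^ q * y)
        (-(q * (-x) ^ (q - 1)) * x + (-x) ^ q * 1) x := by
      have hb : HasDerivAt (fun y : ℝ => (-y) ^ q) (-(q * (-x) ^ (q - 1))) x := by
        have := (Real.hasDerivAt_rpow_const (p := q) (Or.inl (neg_ne_zero.mpr hx.ne)))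
        have := this.comp x (hasDerivAt_neg x)
        simpa [mul_comm, Function.comp_def] using this
      simpa [Pi.mul_def] using hb.mul (hasDerivAt_id x)
    have heq : (fun y : ℝ => |y| ^ q * y) =ᶠ[nhds x] (fun y : ℝ => (-y) ^ q * y) := by
      filter_upwards [Iio_mem_nhds hx] with y hy
      rw [abs_of_neg hy]
    rw [show ((q + 1) * |x| ^ q) = (-(q * (-x) ^ (q - 1)) * x + (-x) ^ q * 1) by
      rw [abs_of_neg hx]
      have hx' : (0:ℝ) < -x := by linarith
      have : (-x) ^ (q - 1) * x = -((-x) ^ q) := by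
        rw [Real.rpow_sub hx', Real.rpow_one]
        field_simp
        rw [div_self hx.ne]
      rw [show -(q * (-x) ^ (q - 1)) * x = -(q * ((-x) ^ (q-1) * x)) by ring, this]
      ring]
    exact h1.congr_of_eventuallyEq heq
  · subst hx
    have : ((q + 1) * |(0:ℝ)| ^ q) = 0 := by
      simp [Real.zero_rpow hq.ne']
    rw [this]
    rw [hasDerivAt_iff_tendsto_slope]
    have hs : ∀ y : ℝ, slope (fun y : ℝ => |y| ^ q * y) 0 y = |y| ^ q := by
      intro y
      simp [slope_def_field]
      rcases eq_or_ne y 0 with rfl | hy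
      · simp [Real.zero_rpow hq.ne']
      · field_simp
    have : ContinuousAt (fun y : ℝ => |y| ^ q) 0 := by
      apply Continuous.continuousAt
      exact continuous_abs.rpow_const (fun x => Or.inr hq.le)
    have h2 := this.continuousWithinAt (s := {(0:ℝ)}ᶜ)
    rw [ContinuousWithinAt] at h2
    simp only [abs_zero, Real.zero_rpow hq.ne'] at h2
    refine Tendsto.congr' ?_ h2
    filter_upwards [self_mem_nhdsWithin] with y hy
    exact (hs y).symm
  · have h1 : HasDerivAt (fun y : ℝ => y ^ q * y)
        ((q * x ^ (q - 1)) * x + x ^ q * 1) x := by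
      exact (Real.hasDerivAt_rpow_const (p := q) (Or.inl hx.ne')).mul (hasDerivAt_id x)
    have heq : (fun y : ℝ => |y| ^ q * y) =ᶠ[nhds x] (fun y : ℝ => y ^ q * y) := by
      filter_upwards [Ioi_mem_nhds hx] with y hy
      rw [abs_of_pos hy]
    rw [show ((q + 1) * |x| ^ q) = ((q * x ^ (q - 1)) * x + x ^ q * 1) by
      rw [abs_of_pos hx]
      have : x ^ (q - 1) * x = x ^ q := by
        rw [Real.rpow_sub hx, Real.rpow_one]
        field_simp
      rw [show (q * x ^ (q - 1)) * x = q * (x ^ (q-1) * x) by ring, this]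
      ring]
    exact h1.congr_of_eventuallyEq heq


lemma abs_rpow_mul_sub_le {q M : ℝ} (hq : 0 < q) {x y : ℝ}
    (hx : x ∈ Icc (-M) M) (hy : y ∈ Icc (-M) M) :
    |(|x| ^ q * x - |y| ^ q * y)| ≤ (q + 1) * M ^ q * |x - y| := by
  have hd := fun z : ℝ => hasDerivAt_abs_rpow_mul hq z
  have := (convex_Icc (-M) M).norm_image_sub_le_of_norm_hasDerivWithin_le
    (f := fun y : ℝ => |y| ^ q * y) (f' := fun x => (q + 1) * |x| ^ q)
    (C := (q + 1) * M ^ q) (fun z _ => (hd z).hasDerivWithinAt) ?_ hy hx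
  · simpa [Real.norm_eq_abs] using this
  · intro z hz
    rw [Real.norm_eq_abs]
    have h1 : |z| ≤ M := abs_le.mpr ⟨hz.1, hz.2⟩
    have h2 : |z| ^ q ≤ M ^ q := Real.rpow_le_rpow (abs_nonneg z) h1 hq.le
    have h3 : (0:ℝ) ≤ (q+1) * |z| ^ q := by positivity
    rw [abs_of_nonneg h3]
    nlinarith [Real.rpow_nonneg (abs_nonneg z) q]

/-- Nodal structure for radial solutions: a nontrivial solution of the radial ODE
`-(r^{N-1}v')' = r^{N-1}(|v|^{4/(N-2)}v + ε r^α v)` on `(0,1)` with `ε > 0`, `v(0) > 0`,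
`v(1) = 0` has finitely many interlaced nodal points `R_j` and critical points `r_j`. -/
theorem nodal_structure (N : ℕ) (hN : 3 ≤ N) (α ε : ℝ) (hα : -2 < α) (hε : 0 < ε)
    (v : ℝ → ℝ)
    (hc : ContinuousOn v (Set.Icc 0 1))
    (hc2 : ContDiffOn ℝ 2 v (Set.Ioc 0 1))
    (hode : ∀ r ∈ Set.Ioo (0 : ℝ) 1,
      deriv (fun s : ℝ => s ^ ((N : ℝ) - 1) * deriv v s) r
        = -(r ^ ((N : ℝ) - 1) * (|v r| ^ (4 / ((N : ℝ) - 2)) * v r + ε * r ^ α * v r)))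
    (hv0 : 0 < v 0) (hv1 : v 1 = 0)
    (hlim : Filter.Tendsto (fun r : ℝ => r ^ ((N : ℝ) - 1) * deriv v r)
      (nhdsWithin 0 (Set.Ioi 0)) (nhds 0)) :
    ∃ k : ℕ, 1 ≤ k ∧ ∃ R r : ℕ → ℝ,
      R 0 = 0 ∧ r 1 = 0 ∧ R k = 1 ∧ r (k + 1) = 1 ∧
      (∀ j, 1 ≤ j → j ≤ k → r j < R j) ∧
      (∀ j, 1 ≤ j → j + 1 ≤ k → R j < r (j + 1)) ∧
      (∀ j, 1 ≤ j → j ≤ k →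
        (∀ x ∈ Set.Ioo (R (j - 1)) (R j), 0 < (-1 : ℝ) ^ (j - 1) * v x) ∧
        v (R j) = 0 ∧
        (∀ x ∈ Set.Ioo (r j) (r (j + 1)), 0 < (-1 : ℝ) ^ j * deriv v x) ∧
        (2 ≤ j → deriv v (r j) = 0)) := by
  have hN3 : (3:ℝ) ≤ (N:ℝ) := by exact_mod_cast hN
  set S : Set ℝ := Set.Ioc 0 1 with hSdef
  set q : ℝ := 4 / ((N:ℝ) - 2) with hqdef
  set n1 : ℝ := (N:ℝ) - 1 with hn1def
  have hq : 0 < q := by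
    apply div_pos (by norm_num); linarith
  have hn1 : 2 ≤ n1 := by simp only [hn1def]; linarith
  have hn1α : 0 < n1 + α := by simp only [hn1def]; linarith
  have hUS : UniqueDiffOn ℝ S := uniqueDiffOn_Ioc 0 1
  set dv : ℝ → ℝ := derivWithin v S with hdvdef
  set W : ℝ → ℝ := fun t => t ^ n1 * dv t with hWdef
  set G : ℝ → ℝ := fun t => -(t ^ n1 * ((|v t| ^ q + ε * t ^ α) * v t)) with hGdef
  have hvS : ∀ t ∈ S, HasDerivWithinAt v (dv t) S t := fun t ht =>
    ((hc2.differentiableOn (by norm_num)) t ht).hasDerivWithinAt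
  have hSnhds : ∀ t ∈ Ioo (0:ℝ) 1, S ∈ nhds t := fun t ht =>
    mem_nhds_iff.mpr ⟨Ioo 0 1, Ioo_subset_Ioc_self, isOpen_Ioo, ht⟩
  have hdvIoo : ∀ t ∈ Ioo (0:ℝ) 1, dv t = deriv v t := fun t ht =>
    derivWithin_of_mem_nhds (hSnhds t ht)
  have hvd : ∀ t ∈ Ioo (0:ℝ) 1, HasDerivAt v (dv t) t := fun t ht =>
    (hvS t (Ioo_subset_Ioc_self ht)).hasDerivAt (hSnhds t ht)
  have hdvcont : ContinuousOn dv S :=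
    (hc2.derivWithin (m := 1) hUS (by norm_num)).continuousOn
  have hrpowC : ∀ p : ℝ, ContDiffOn ℝ 1 (fun t : ℝ => t ^ p) S := by
    intro p t ht
    exact (Real.contDiffAt_rpow_const_of_ne (p := p) (ne_of_gt ht.1)).contDiffWithinAt
  have hWc1 : ContDiffOn ℝ 1 W S := by
    exact (hrpowC n1).mul (hc2.derivWithin (m := 1) hUS (by norm_num))
  have hWcont : ContinuousOn W S := hWc1.continuousOn
  have hWS : ∀ t ∈ S, HasDerivWithinAt W (derivWithin W S t) S t := fun t ht =>
    ((hWc1.differentiableOn (by norm_num)) t ht).hasDerivWithinAt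
  have hDWcont : ContinuousOn (derivWithin W S) S :=
    hWc1.continuousOn_derivWithin hUS le_rfl
  have hWIoo : ∀ t ∈ Ioo (0:ℝ) 1, W t = t ^ n1 * deriv v t := fun t ht => by
    show t ^ n1 * dv t = _
    rw [hdvIoo t ht]
  have hGcont : ContinuousOn G S := by
    apply ContinuousOn.neg
    apply ContinuousOn.mul ((hrpowC n1).continuousOn)
    apply ContinuousOn.mul
    · apply ContinuousOn.add
      · exact ((hc.mono (Ioc_subset_Icc_self)).abs).rpow_const (fun t ht => Or.inr hq.le)
      · exact continuousOn_const.mul ((hrpowC α).continuousOn)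
    · exact hc.mono Ioc_subset_Icc_self
  have hDWIoo : ∀ t ∈ Ioo (0:ℝ) 1, derivWithin W S t = G t := by
    intro t ht
    rw [derivWithin_of_mem_nhds (hSnhds t ht)]
    have hW_eventually : W =ᶠ[nhds t] (fun s : ℝ => s ^ n1 * deriv v s) := by
      filter_upwards [isOpen_Ioo.mem_nhds ht] with s hs
      exact hWIoo s hs
    rw [hW_eventually.deriv_eq, hode t ht, hGdef]
    ring_nf
  have hDWG : ∀ t ∈ S, derivWithin W S t = G t := by
    intro t ht
    rcases lt_or_eq_of_le ht.2 with h1 | h1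
    · exact hDWIoo t ⟨ht.1, h1⟩
    · subst h1
      have h1c : (1:ℝ) ∈ closure (Ioo (0:ℝ) 1) := by
        rw [closure_Ioo (by norm_num : (0:ℝ) ≠ 1)]
        exact ⟨by norm_num, le_rfl⟩
      have hne := mem_closure_iff_nhdsWithin_neBot.mp h1c
      have h1S : (1:ℝ) ∈ S := ⟨by norm_num, le_rfl⟩
      have t1 : Tendsto (derivWithin W S) (nhdsWithin 1 (Ioo (0:ℝ) 1))
          (nhds (derivWithin W S 1)) := (hDWcont 1 h1S).mono Ioo_subset_Ioc_self
      have t2 : Tendsto G (nhdsWithin 1 (Ioo (0:ℝ) 1)) (nhds (G 1)) :=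
        (hGcont 1 h1S).mono Ioo_subset_Ioc_self
      have t3 : derivWithin W S =ᶠ[nhdsWithin 1 (Ioo (0:ℝ) 1)] G := by
        filter_upwards [self_mem_nhdsWithin] with s hs
        exact hDWIoo s hs
      exact tendsto_nhds_unique (t1.congr' t3) t2
  -- Uniqueness lemma: no degenerate zero
  have hU : ∀ c ∈ S, v c = 0 → dv c = 0 → False := by
    intro c hcS hvc hdvc
    have hc1 : 0 < c := hcS.1
    have hzero : ∀ a ∈ Ioo (0:ℝ) c, v a = 0 := by
      intro a ha
      have hac : a ≤ c := le_of_lt ha.2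
      have hsubS : Icc a c ⊆ S := fun t ht => ⟨lt_of_lt_of_le ha.1 ht.1, le_trans ht.2 hcS.2⟩
      have hsubI : Icc a c ⊆ Icc 0 1 := fun t ht =>
        ⟨le_trans (le_of_lt ha.1) ht.1, le_trans ht.2 hcS.2⟩
      set f : ℝ → ℝ × ℝ := fun t => (v t, W t) with hfdef
      have hfc : ContinuousOn f (Icc a c) := (hc.mono hsubI).prodMk (hWcont.mono hsubS)
      obtain ⟨C, hC⟩ := isCompact_Icc.exists_bound_of_continuousOn hfc
      have hC0 : 0 ≤ C := le_trans (norm_nonneg _) (hC a (left_mem_Icc.mpr hac))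
      set M : ℝ := C + 1 with hMdef
      have hM : 0 < M := by linarith
      have hfM : ∀ t ∈ Icc a c, |v t| ≤ M ∧ |W t| ≤ M := by
        intro t ht
        have h5 := hC t ht
        rw [Prod.norm_def] at h5
        simp only [Real.norm_eq_abs] at h5
        constructor
        · linarith [le_trans (le_max_left (|v t|) (|W t|)) h5]
        · linarith [le_trans (le_max_right (|v t|) (|W t|)) h5]
      set τ : ℝ → ℝ := fun t => max a (min t c) with hτdef
      have hτmem : ∀ t, τ t ∈ Icc a c := fun t => ⟨le_max_left _ _, max_le hac (min_le_right _ _)⟩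
      have hτpos : ∀ t, 0 < τ t := fun t => lt_of_lt_of_le ha.1 (hτmem t).1
      have hτle1 : ∀ t, τ t ≤ 1 := fun t => le_trans (hτmem t).2 hcS.2
      have hτid : ∀ t ∈ Icc a c, τ t = t := by
        intro t ht
        show max a (min t c) = t
        rw [min_eq_left ht.2, max_eq_right ht.1]
      set Vf : ℝ → ℝ × ℝ → ℝ × ℝ := fun t p =>
        ((τ t) ^ (-n1) * p.2, -((τ t) ^ n1 * ((|p.1| ^ q + ε * (τ t) ^ α) * p.1))) with hVfdef
      set K : ℝ := max (a ^ (-n1)) ((q + 1) * M ^ q + ε) with hKdef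
      have hK0 : 0 ≤ K := le_trans (by positivity) (le_max_right _ _)
      have hlip : ∀ t, LipschitzOnWith K.toNNReal (Vf t) (Icc (-M) M ×ˢ Icc (-M) M) := by
        intro t
        rw [lipschitzOnWith_iff_dist_le_mul]
        intro p hp p' hp'
        rw [Real.coe_toNNReal K hK0, Prod.dist_eq]
        have hτn1 : (τ t) ^ n1 ≤ 1 :=
          Real.rpow_le_one (le_of_lt (hτpos t)) (hτle1 t) (by linarith)
        have hτn1pos : 0 < (τ t) ^ n1 := Real.rpow_pos_of_pos (hτpos t) _
        have hτnegpos : 0 < (τ t) ^ (-n1) := Real.rpow_pos_of_pos (hτpos t) _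
        have hτneg : (τ t) ^ (-n1) ≤ a ^ (-n1) :=
          Real.rpow_le_rpow_of_nonpos ha.1 (hτmem t).1 (by linarith)
        have hτmix : (τ t) ^ n1 * ((τ t) ^ α) ≤ 1 := by
          rw [← Real.rpow_add (hτpos t)]
          exact Real.rpow_le_one (le_of_lt (hτpos t)) (hτle1 t) (le_of_lt hn1α)
        have hdp : 0 ≤ dist p p' := dist_nonneg
        have hd1 : |p.1 - p'.1| ≤ dist p p' := by
          rw [Prod.dist_eq, ← Real.dist_eq]; exact le_max_left _ _
        have hd2 : |p.2 - p'.2| ≤ dist p p' := by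
          rw [Prod.dist_eq, ← Real.dist_eq]; exact le_max_right _ _
        have hfst : dist ((Vf t p).1) ((Vf t p').1) ≤ K * dist p p' := by
          simp only [hVfdef, Real.dist_eq]
          rw [show (τ t) ^ (-n1) * p.2 - (τ t) ^ (-n1) * p'.2
              = (τ t) ^ (-n1) * (p.2 - p'.2) by ring, abs_mul,
            abs_of_pos hτnegpos]
          have h3 : a ^ (-n1) ≤ K := le_max_left _ _
          calc (τ t) ^ (-n1) * |p.2 - p'.2| ≤ K * |p.2 - p'.2| :=
                mul_le_mul_of_nonneg_right (le_trans hτneg h3) (abs_nonneg _)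
            _ ≤ K * dist p p' := mul_le_mul_of_nonneg_left hd2 hK0
        have hsnd : dist ((Vf t p).2) ((Vf t p').2) ≤ K * dist p p' := by
          simp only [hVfdef, Real.dist_eq]
          have hhl : |(|p.1| ^ q * p.1 - |p'.1| ^ q * p'.1)| ≤ (q + 1) * M ^ q * |p.1 - p'.1| :=
            abs_rpow_mul_sub_le hq hp.1 hp'.1
          have key : |(-((τ t) ^ n1 * ((|p.1| ^ q + ε * (τ t) ^ α) * p.1))
              - -((τ t) ^ n1 * ((|p'.1| ^ q + ε * (τ t) ^ α) * p'.1)))|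
              = (τ t) ^ n1 * |(|p.1| ^ q * p.1 - |p'.1| ^ q * p'.1)
                  + ε * (τ t) ^ α * (p.1 - p'.1)| := by
            rw [show (-((τ t) ^ n1 * ((|p.1| ^ q + ε * (τ t) ^ α) * p.1))
              - -((τ t) ^ n1 * ((|p'.1| ^ q + ε * (τ t) ^ α) * p'.1)))
              = -((τ t) ^ n1 * ((|p.1| ^ q * p.1 - |p'.1| ^ q * p'.1)
                  + ε * (τ t) ^ α * (p.1 - p'.1))) by ring, abs_neg, abs_mul,
              abs_of_pos hτn1pos]
          rw [key]
          have htri : |(|p.1| ^ q * p.1 - |p'.1| ^ q * p'.1) + ε * (τ t) ^ α * (p.1 - p'.1)|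
              ≤ (q + 1) * M ^ q * |p.1 - p'.1| + ε * (τ t) ^ α * |p.1 - p'.1| := by
            refine le_trans (abs_add_le _ _) ?_
            gcongr
            rw [abs_mul, abs_mul]
            rw [abs_of_pos hε, abs_of_pos (Real.rpow_pos_of_pos (hτpos t) α)]
          have hτα : 0 < (τ t) ^ α := Real.rpow_pos_of_pos (hτpos t) α
          have h4 : (q + 1) * M ^ q + ε ≤ K := le_max_right _ _
          have hMq : 0 ≤ (q + 1) * M ^ q := by positivity
          calc (τ t) ^ n1 * |(|p.1| ^ q * p.1 - |p'.1| ^ q * p'.1)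
                + ε * (τ t) ^ α * (p.1 - p'.1)|
              ≤ (τ t) ^ n1 * ((q + 1) * M ^ q * |p.1 - p'.1|
                + ε * (τ t) ^ α * |p.1 - p'.1|) :=
              mul_le_mul_of_nonneg_left htri hτn1pos.le
            _ = ((τ t) ^ n1) * ((q + 1) * M ^ q) * |p.1 - p'.1|
                + ((τ t) ^ n1 * (τ t) ^ α) * (ε * |p.1 - p'.1|) := by ring
            _ ≤ 1 * ((q + 1) * M ^ q) * |p.1 - p'.1| + 1 * (ε * |p.1 - p'.1|) := by
              have hε1 : 0 ≤ ε * |p.1 - p'.1| := by positivity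
              have hab : 0 ≤ |p.1 - p'.1| := abs_nonneg _
              gcongr
            _ = ((q + 1) * M ^ q + ε) * |p.1 - p'.1| := by ring
            _ ≤ K * |p.1 - p'.1| := mul_le_mul_of_nonneg_right h4 (abs_nonneg _)
            _ ≤ K * dist p p' := mul_le_mul_of_nonneg_left hd1 hK0
        exact max_le hfst hsnd
      have hf' : ∀ t ∈ Ioc a c, HasDerivWithinAt f (Vf t (f t)) (Iic t) t := by
        intro t ht
        have htS : t ∈ S := ⟨lt_trans ha.1 ht.1, le_trans ht.2 hcS.2⟩
        have hmem : S ∈ nhdsWithin t (Iic t) :=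
          mem_nhdsWithin.mpr ⟨Ioi 0, isOpen_Ioi, htS.1,
            fun s hs => ⟨hs.1, le_trans hs.2 htS.2⟩⟩
        have hpair : HasDerivWithinAt f (dv t, derivWithin W S t) S t :=
          (hvS t htS).prodMk (hWS t htS)
        have hres := hpair.mono_of_mem_nhdsWithin hmem
        have hτt : τ t = t := hτid t ⟨le_of_lt ht.1, ht.2⟩
        have h1 : (τ t) ^ (-n1) * (W t) = dv t := by
          rw [hτt]
          show t ^ (-n1) * (t ^ n1 * dv t) = dv t
          rw [← mul_assoc, ← Real.rpow_add htS.1]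
          norm_num
        have h2 : -((τ t) ^ n1 * ((|v t| ^ q + ε * (τ t) ^ α) * v t))
            = derivWithin W S t := by
          rw [hτt, hDWG t htS]
        have hval : Vf t (f t) = (dv t, derivWithin W S t) := by
          simp only [hVfdef, hfdef]
          exact Prod.ext h1 h2
        rw [hval]
        exact hres
      have hfs : ∀ t ∈ Ioc a c, f t ∈ Icc (-M) M ×ˢ Icc (-M) M := by
        intro t ht
        obtain ⟨h1, h2⟩ := hfM t ⟨le_of_lt ht.1, ht.2⟩
        exact ⟨⟨(abs_le.mp h1).1, (abs_le.mp h1).2⟩, ⟨(abs_le.mp h2).1, (abs_le.mp h2).2⟩⟩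
      have hg' : ∀ t ∈ Ioc a c,
          HasDerivWithinAt (fun _ : ℝ => ((0:ℝ), (0:ℝ))) (Vf t ((0:ℝ), (0:ℝ))) (Iic t) t := by
        intro t ht
        have hv0' : Vf t ((0:ℝ), (0:ℝ)) = ((0:ℝ), (0:ℝ)) := by
          simp [hVfdef]
        rw [hv0']
        exact hasDerivWithinAt_const _ _ _
      have hgs : ∀ t ∈ Ioc a c, (fun _ : ℝ => ((0:ℝ), (0:ℝ))) t ∈ Icc (-M) M ×ˢ Icc (-M) M := by
        intro t ht
        rw [Set.mem_prod]
        constructor <;>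
          · rw [Set.mem_Icc]
            constructor <;> simp <;> linarith
      have hfb : f c = (fun _ : ℝ => ((0:ℝ), (0:ℝ))) c := by
        simp only [hfdef]
        refine Prod.ext hvc ?_
        show c ^ n1 * dv c = 0
        rw [hdvc, mul_zero]
      have heqon := ODE_solution_unique_of_mem_Icc_left (fun t _ => hlip t) hfc hf' hfs
        continuousOn_const hg' hgs hfb
      have := heqon (left_mem_Icc.mpr hac)
      exact congrArg Prod.fst this
    have h0c : (0:ℝ) ∈ closure (Ioo 0 c) := by
      rw [closure_Ioo (ne_of_lt hc1)]
      exact ⟨le_rfl, le_of_lt hc1⟩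
    have hne := mem_closure_iff_nhdsWithin_neBot.mp h0c
    have t1 : Tendsto v (nhdsWithin 0 (Ioo 0 c)) (nhds (v 0)) :=
      (hc 0 ⟨le_rfl, by norm_num⟩).mono
        (fun x hx => ⟨le_of_lt hx.1, le_trans (le_of_lt hx.2) hcS.2⟩)
    have t3 : (fun _ : ℝ => (0:ℝ)) =ᶠ[nhdsWithin 0 (Ioo 0 c)] v := by
      filter_upwards [self_mem_nhdsWithin] with s hs
      exact (hzero s hs).symm
    have t2 : Tendsto v (nhdsWithin 0 (Ioo 0 c)) (nhds 0) :=
      (tendsto_const_nhds).congr' t3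
    have : v 0 = 0 := tendsto_nhds_unique t1 t2
    linarith
  -- limit of W at 0+
  have hIooMem : Ioo (0:ℝ) 1 ∈ nhdsWithin (0:ℝ) (Ioi 0) :=
    mem_nhdsWithin.mpr ⟨Iio 1, isOpen_Iio, by norm_num, fun s hs => ⟨hs.2, hs.1⟩⟩
  have hlimW : Tendsto W (nhdsWithin 0 (Ioi 0)) (nhds 0) := by
    apply hlim.congr'
    filter_upwards [hIooMem] with s hs
    exact (hWIoo s hs).symm
  -- positivity near zero
  obtain ⟨δ, hδ0, hδ1, hδpos⟩ : ∃ δ, 0 < δ ∧ δ < 1 ∧ ∀ t ∈ Icc 0 δ, 0 < v t := by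
    have hcw : ContinuousWithinAt v (Icc 0 1) 0 := hc 0 ⟨le_rfl, by norm_num⟩
    have hev : ∀ᶠ t in nhdsWithin 0 (Icc (0:ℝ) 1), 0 < v t :=
      hcw.eventually (eventually_gt_nhds hv0)  -- may need fix
    rw [eventually_nhdsWithin_iff, Metric.eventually_nhds_iff] at hev
    obtain ⟨r, hr0, hr⟩ := hev
    refine ⟨min (r/2) (1/2), by positivity, ?_, ?_⟩
    · exact lt_of_le_of_lt (min_le_right _ _) (by norm_num)
    · intro t ht
      have ht1 : t ∈ Icc (0:ℝ) 1 := ⟨ht.1, le_trans ht.2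
        (le_trans (min_le_right _ _) (by norm_num))⟩
      apply hr ?_ ht1
      rw [Real.dist_eq]
      have : |t - 0| ≤ min (r/2) (1/2) := by
        rw [sub_zero, abs_of_nonneg ht.1]; exact ht.2
      exact lt_of_le_of_lt this (lt_of_le_of_lt (min_le_left _ _) (by linarith))
  -- the zero set
  set Z : Set ℝ := {t | t ∈ S ∧ v t = 0} with hZdef
  have h1Z : (1:ℝ) ∈ Z := ⟨⟨by norm_num, le_rfl⟩, hv1⟩
  have hZsub : Z ⊆ Icc δ 1 := by
    intro z hz
    refine ⟨?_, hz.1.2⟩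
    by_contra hlt
    push_neg at hlt
    have : 0 < v z := hδpos z ⟨le_of_lt hz.1.1, le_of_lt hlt⟩
    rw [hz.2] at this
    exact lt_irrefl 0 this
  have hZfin : Z.Finite := by
    by_contra hinf
    have hinf' : Z.Infinite := hinf
    obtain ⟨cc, hccK, hacc⟩ := hinf'.exists_accPt_of_subset_isCompact isCompact_Icc hZsub
    have hccS : cc ∈ S := ⟨lt_of_lt_of_le hδ0 hccK.1, hccK.2⟩
    have hneB : (nhdsWithin cc (Z \ {cc})).NeBot := by
      have heqf : nhdsWithin cc (Z \ {cc}) = nhdsWithin cc {cc}ᶜ ⊓ Filter.principal Z := by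
        rw [nhdsWithin, nhdsWithin, Set.diff_eq, ← Filter.inf_principal,
          inf_comm (Filter.principal Z) _, ← inf_assoc]
      rw [heqf]
      exact hacc
    have hvcc : v cc = 0 := by
      have t1 : Tendsto v (nhdsWithin cc (Z \ {cc})) (nhds (v cc)) :=
        (hc cc ⟨le_trans (le_of_lt hδ0) hccK.1, hccK.2⟩).mono
          (fun x hx => ⟨le_trans (le_of_lt hδ0) (hZsub hx.1).1, (hZsub hx.1).2⟩)
      have t2 : Tendsto v (nhdsWithin cc (Z \ {cc})) (nhds 0) := by
        apply tendsto_const_nhds.congr'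
        filter_upwards [self_mem_nhdsWithin] with s hs
        exact hs.1.2.symm
      exact tendsto_nhds_unique t1 t2
    have hdvcc : dv cc = 0 := by
      have hslope := hasDerivWithinAt_iff_tendsto_slope.mp (hvS cc hccS)
      have t1 : Tendsto (slope v cc) (nhdsWithin cc (Z \ {cc})) (nhds (dv cc)) :=
        hslope.mono_left (nhdsWithin_mono cc (fun x hx => ⟨hx.1.1, hx.2⟩))
      have t2 : Tendsto (slope v cc) (nhdsWithin cc (Z \ {cc})) (nhds 0) := by
        apply tendsto_const_nhds.congr'
        filter_upwards [self_mem_nhdsWithin] with s hs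
        rw [slope_def_field, hvcc, hs.1.2]
        simp
      exact tendsto_nhds_unique t1 t2
    exact hU cc hccS hvcc hdvcc
  -- order the zeros
  set Zf : Finset ℝ := hZfin.toFinset with hZfdef
  have hZfmem : ∀ x : ℝ, x ∈ Zf ↔ x ∈ Z := fun x => hZfin.mem_toFinset
  set k : ℕ := Zf.card with hkdef
  have hk1 : 1 ≤ k := Finset.card_pos.mpr ⟨1, (hZfmem 1).mpr h1Z⟩
  set eo := Zf.orderIsoOfFin hkdef.symm with heodef
  set R : ℕ → ℝ := fun j =>
    if h0 : j = 0 then 0 else if h : j ≤ k then ((eo ⟨j - 1, by omega⟩ : Zf) : ℝ) else 1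
    with hRdef
  have hR0 : R 0 = 0 := by simp [hRdef]
  have hRval : ∀ j (h1 : 1 ≤ j) (h2 : j ≤ k), R j = ((eo ⟨j - 1, by omega⟩ : Zf) : ℝ) := by
    intro j h1 h2
    simp only [hRdef]
    rw [dif_neg (by omega), dif_pos h2]
  have hRmemZ : ∀ j, 1 ≤ j → j ≤ k → R j ∈ Z := by
    intro j h1 h2
    rw [hRval j h1 h2]
    exact (hZfmem _).mp (eo ⟨j - 1, by omega⟩).2
  have hRlt : ∀ i j, 1 ≤ i → i < j → j ≤ k → R i < R j := by
    intro i j h1 h2 h3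
    rw [hRval i h1 (by omega), hRval j (by omega) h3]
    have : (⟨i - 1, by omega⟩ : Fin k) < ⟨j - 1, by omega⟩ := by
      rw [Fin.lt_def]; simp; omega
    exact Subtype.coe_lt_coe.mpr ((eo.lt_iff_lt).mpr this)
  have hR0lt : ∀ j, 1 ≤ j → j ≤ k → 0 < R j := fun j h1 h2 => (hRmemZ j h1 h2).1.1
  have hRle1 : ∀ j, 1 ≤ j → j ≤ k → R j ≤ 1 := fun j h1 h2 => (hRmemZ j h1 h2).1.2
  have hvR : ∀ j, 1 ≤ j → j ≤ k → v (R j) = 0 := fun j h1 h2 => (hRmemZ j h1 h2).2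
  have hRprev0 : ∀ j, 1 ≤ j → j ≤ k → 0 ≤ R (j - 1) := by
    intro j h1 h2
    rcases Nat.eq_or_lt_of_le h1 with h | h
    · rw [← h]; simp [hR0]
    · exact le_of_lt (hR0lt (j-1) (by omega) (by omega))
  have hRprevlt : ∀ j, 1 ≤ j → j ≤ k → R (j - 1) < R j := by
    intro j h1 h2
    rcases Nat.eq_or_lt_of_le h1 with h | h
    · rw [← h]; simp only [Nat.sub_self, hR0]; exact hR0lt 1 le_rfl (h ▸ h2)
    · exact hRlt (j-1) j (by omega) (by omega) h2
  have hRk1 : R k = 1 := by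
    have hle : R k ≤ 1 := hRle1 k hk1 le_rfl
    have hge : (1:ℝ) ≤ R k := by
      rw [hRval k hk1 le_rfl]
      have h1f : (1:ℝ) ∈ Zf := (hZfmem 1).mpr h1Z
      set i := eo.symm ⟨1, h1f⟩ with hidef
      have hx : ((eo i : Zf) : ℝ) = 1 := by rw [OrderIso.apply_symm_apply]
      rw [← hx]
      have : i ≤ ⟨k - 1, by omega⟩ := by
        rw [Fin.le_def]; simp; omega
      exact Subtype.coe_le_coe.mpr ((eo.le_iff_le).mpr this)
    linarith
  have hgap : ∀ j, 1 ≤ j → j ≤ k → ∀ x, R (j - 1) < x → x < R j → v x ≠ 0 := by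
    intro j hj1 hjk x hx1 hx2 hvx
    have hxS : x ∈ S := ⟨lt_of_le_of_lt (hRprev0 j hj1 hjk) hx1,
      le_trans (le_of_lt hx2) (hRle1 j hj1 hjk)⟩
    have hxZ : x ∈ Zf := (hZfmem x).mpr ⟨hxS, hvx⟩
    obtain ⟨i, hx⟩ : ∃ i, ((eo i : Zf) : ℝ) = x :=
      ⟨eo.symm ⟨x, hxZ⟩, by rw [OrderIso.apply_symm_apply]⟩
    rcases Nat.eq_or_lt_of_le hj1 with h | h
    · -- j = 1 : x < R 1 = smallest element
      rw [← h] at hx2 hjk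
      rw [hRval 1 le_rfl hjk] at hx2
      have h0i : (⟨0, by omega⟩ : Fin k) ≤ i := by rw [Fin.le_def]; simp
      have := Subtype.coe_le_coe.mpr ((eo.le_iff_le).mpr h0i)
      rw [hx] at this
      have : (1:ℕ) - 1 = 0 := rfl
      simp only [this] at hx2 ⊢
      linarith [Subtype.coe_le_coe.mpr ((eo.le_iff_le).mpr h0i), hx]
    · -- j ≥ 2
      rw [hRval (j-1) (by omega) (by omega)] at hx1
      rw [hRval j (by omega) hjk] at hx2
      rw [← hx] at hx1 hx2
      have hi1 : (⟨j - 1 - 1, by omega⟩ : Fin k) < i :=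
        (eo.lt_iff_lt).mp (Subtype.coe_lt_coe.mp hx1)
      have hi2 : i < (⟨j - 1, by omega⟩ : Fin k) :=
        (eo.lt_iff_lt).mp (Subtype.coe_lt_coe.mp hx2)
      rw [Fin.lt_def] at hi1 hi2
      simp at hi1 hi2
      omega
  -- IVT helper
  have hIVT : ∀ a b : ℝ, a < b → Icc a b ⊆ Icc (0:ℝ) 1 → v a * v b < 0 →
      ∃ z ∈ Ioo a b, v z = 0 := by
    intro a b hab hsub hvab
    rcases mul_neg_iff.mp hvab with ⟨h1, h2⟩ | ⟨h1, h2⟩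
    · obtain ⟨z, hz, hz0⟩ := intermediate_value_Ioo' (le_of_lt hab) (hc.mono hsub)
        (⟨h2, h1⟩ : (0:ℝ) ∈ Ioo (v b) (v a))
      exact ⟨z, hz, hz0⟩
    · obtain ⟨z, hz, hz0⟩ := intermediate_value_Ioo (le_of_lt hab) (hc.mono hsub)
        (⟨h1, h2⟩ : (0:ℝ) ∈ Ioo (v a) (v b))
      exact ⟨z, hz, hz0⟩
  -- base positivity on (0, R 1)
  have hbase : ∀ x, 0 < x → x < R 1 → 0 < v x := by
    intro x hx0 hx1
    have hR1le : R 1 ≤ 1 := hRle1 1 le_rfl hk1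
    rcases le_or_gt x δ with hxδ | hxδ
    · exact hδpos x ⟨le_of_lt hx0, hxδ⟩
    · by_contra hle
      push_neg at hle
      have hne : v x ≠ 0 := by
        have := hgap 1 le_rfl hk1 x (by simpa [hR0] using hx0) hx1
        simpa using this
      have hlt : v x < 0 := lt_of_le_of_ne hle hne
      have hδR : δ < R 1 := lt_trans hxδ hx1
      obtain ⟨z, hz, hz0⟩ := hIVT δ x hxδ
        (fun t ht => ⟨le_trans (le_of_lt hδ0) ht.1, le_trans ht.2 (le_trans (le_of_lt hx1) hR1le)⟩)
        (mul_neg_of_pos_of_neg (hδpos δ ⟨le_of_lt hδ0, le_rfl⟩) hlt)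
      exact hgap 1 le_rfl hk1 z (by simpa [hR0] using lt_trans hδ0 hz.1)
        (lt_trans hz.2 hx1) hz0
  -- derivative sign at right endpoint of a nodal interval
  have hdvneg : ∀ j, 1 ≤ j → j ≤ k →
      (∀ x, R (j - 1) < x → x < R j → 0 < (-1:ℝ)^(j-1) * v x) →
      (-1:ℝ)^(j-1) * dv (R j) < 0 := by
    intro j h1 h2 hsgn
    have hRjS : R j ∈ S := (hRmemZ j h1 h2).1
    have hsub : Ioo (R (j-1)) (R j) ⊆ S \ {R j} := fun z hz =>
      ⟨⟨lt_of_le_of_lt (hRprev0 j h1 h2) hz.1,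
        le_trans (le_of_lt hz.2) (hRle1 j h1 h2)⟩, ne_of_lt hz.2⟩
    have hneB : (nhdsWithin (R j) (Ioo (R (j-1)) (R j))).NeBot := by
      apply mem_closure_iff_nhdsWithin_neBot.mp
      rw [closure_Ioo (ne_of_lt (hRprevlt j h1 h2))]
      exact ⟨le_of_lt (hRprevlt j h1 h2), le_rfl⟩
    have hslope := (hasDerivWithinAt_iff_tendsto_slope.mp (hvS (R j) hRjS)).mono_left
      (nhdsWithin_mono _ hsub)
    have hσslope : Tendsto (fun x => (-1:ℝ)^(j-1) * slope v (R j) x)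
        (nhdsWithin (R j) (Ioo (R (j-1)) (R j))) (nhds ((-1:ℝ)^(j-1) * dv (R j))) :=
      hslope.const_mul _
    have hle : (-1:ℝ)^(j-1) * dv (R j) ≤ 0 := by
      apply le_of_tendsto hσslope
      filter_upwards [self_mem_nhdsWithin] with x hx
      have hvx := hsgn x hx.1 hx.2
      have hd : x - R j < 0 := sub_neg.mpr hx.2
      rw [slope_def_field, hvR j h1 h2, sub_zero, ← mul_div_assoc]
      exact le_of_lt (div_neg_of_pos_of_neg hvx hd)
    have hne : dv (R j) ≠ 0 := fun h => hU (R j) hRjS (hvR j h1 h2) h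
    exact lt_of_le_of_ne hle (mul_ne_zero (pow_ne_zero _ (by norm_num)) hne)
  -- alternating signs on nodal intervals
  have hsign : ∀ j, 1 ≤ j → j ≤ k → ∀ x, R (j - 1) < x → x < R j →
      0 < (-1:ℝ)^(j-1) * v x := by
    intro j
    induction j with
    | zero => intro h1; exact absurd h1 (by omega)
    | succ n ih =>
      intro h1 hk' x hx1 hx2
      simp only [Nat.add_sub_cancel] at hx1 ⊢
      rcases Nat.eq_zero_or_pos n with hn0 | hn1
      · subst hn0
        simp only [hR0] at hx1
        simpa using hbase x hx1 hx2
      · have hihyp := ih (by omega) (by omega)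
        have hdvn := hdvneg n (by omega) (by omega) hihyp
        have hRnS : R n ∈ S := (hRmemZ n (by omega) (by omega)).1
        have hRlt' : R n < R (n+1) := hRlt n (n+1) (by omega) (by omega) hk'
        have hRn1le : R (n+1) ≤ 1 := hRle1 (n+1) (by omega) hk'
        have hsub : Ioo (R n) (R (n+1)) ⊆ S \ {R n} := fun z hz =>
          ⟨⟨lt_trans hRnS.1 hz.1, le_trans (le_of_lt hz.2) hRn1le⟩, ne_of_gt hz.1⟩
        have hneB : (nhdsWithin (R n) (Ioo (R n) (R (n+1)))).NeBot := by
          apply mem_closure_iff_nhdsWithin_neBot.mp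
          rw [closure_Ioo (ne_of_lt hRlt')]
          exact ⟨le_rfl, le_of_lt hRlt'⟩
        have hslope := (hasDerivWithinAt_iff_tendsto_slope.mp (hvS (R n) hRnS)).mono_left
          (nhdsWithin_mono _ hsub)
        have hev : ∀ᶠ z in nhdsWithin (R n) (Ioo (R n) (R (n+1))),
            (-1:ℝ)^(n-1) * slope v (R n) z < 0 :=
          (hslope.const_mul ((-1:ℝ)^(n-1))).eventually_lt_const hdvn
        obtain ⟨y, hylt, hy⟩ := (hev.and self_mem_nhdsWithin).exists
        have hyd : 0 < y - R n := sub_pos.mpr hy.1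
        rw [slope_def_field, hvR n (by omega) (by omega), sub_zero, ← mul_div_assoc] at hylt
        have hvyneg : (-1:ℝ)^(n-1) * v y < 0 := by
          by_contra hge
          push_neg at hge
          exact absurd hylt (not_lt.mpr (div_nonneg hge (le_of_lt hyd)))
        have hσ : ((-1:ℝ))^n = -((-1:ℝ))^(n-1) := by
          conv_lhs => rw [show n = (n-1)+1 by omega]
          rw [pow_succ]
          ring
        have hvy : 0 < (-1:ℝ)^n * v y := by rw [hσ]; linarith
        by_contra hle0
        push_neg at hle0
        have hvxne : v x ≠ 0 := hgap (n+1) (by omega) hk' x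
          (by simpa [Nat.add_sub_cancel] using hx1) hx2
        have hvx : (-1:ℝ)^n * v x < 0 :=
          lt_of_le_of_ne hle0 (mul_ne_zero (pow_ne_zero _ (by norm_num)) hvxne)
        have hsq : ((-1:ℝ)^n) * ((-1:ℝ)^n) = 1 := by
          rw [← pow_add, ← two_mul, pow_mul]
          norm_num
        have hprod : v x * v y < 0 := by nlinarith
        have hxy : x ≠ y := by
          intro h
          rw [h] at hvx
          linarith
        have hIccsub : ∀ u w : ℝ, R n < u → w < R (n+1) → Icc u w ⊆ Icc (0:ℝ) 1 :=
          fun u w hu hw t ht => ⟨le_trans (le_of_lt (lt_trans hRnS.1 hu)) ht.1,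
            le_trans ht.2 (le_trans (le_of_lt hw) hRn1le)⟩
        rcases lt_or_gt_of_ne hxy with hlt | hlt
        · obtain ⟨z, hz, hz0⟩ := hIVT x y hlt (hIccsub x y hx1 hy.2) hprod
          exact hgap (n+1) (by omega) hk' z
            (by simpa [Nat.add_sub_cancel] using lt_trans hx1 hz.1) (lt_trans hz.2 hy.2) hz0
        · obtain ⟨z, hz, hz0⟩ := hIVT y x hlt (hIccsub y x hy.1 hx2)
            (by nlinarith : v y * v x < 0)
          exact hgap (n+1) (by omega) hk' z
            (by simpa [Nat.add_sub_cancel] using lt_trans hy.1 hz.1) (lt_trans hz.2 hx2) hz0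
  have hdvRj : ∀ j, 1 ≤ j → j ≤ k → (-1:ℝ)^(j-1) * dv (R j) < 0 :=
    fun j h1 h2 => hdvneg j h1 h2 (hsign j h1 h2)
  -- sign flip helper
  have hσflip : ∀ j : ℕ, 1 ≤ j → ((-1:ℝ))^j = -((-1:ℝ))^(j-1) := by
    intro j hj
    conv_lhs => rw [show j = (j-1)+1 by omega]
    rw [pow_succ]; ring
  -- W has derivative G on the interior
  have hWderiv : ∀ t ∈ Ioo (0:ℝ) 1, HasDerivAt W (G t) t := by
    intro t ht
    have := (hWS t (Ioo_subset_Ioc_self ht)).hasDerivAt (hSnhds t ht)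
    rwa [hDWIoo t ht] at this
  -- sign of G on nodal intervals
  have hGsign : ∀ j, 1 ≤ j → j ≤ k → ∀ t, R (j-1) < t → t < R j →
      (-1:ℝ)^(j-1) * G t < 0 := by
    intro j h1 h2 t ht1 ht2
    have ht0 : 0 < t := lt_of_le_of_lt (hRprev0 j h1 h2) ht1
    have htpos : 0 < t ^ n1 := Real.rpow_pos_of_pos ht0 _
    have hB : 0 < |v t| ^ q + ε * t ^ α :=
      add_pos_of_nonneg_of_pos (Real.rpow_nonneg (abs_nonneg _) _)
        (mul_pos hε (Real.rpow_pos_of_pos ht0 _))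
    have hvt := hsign j h1 h2 t ht1 ht2
    have heq : (-1:ℝ)^(j-1) * G t
        = -(t ^ n1 * ((|v t| ^ q + ε * t ^ α) * ((-1:ℝ)^(j-1) * v t))) := by
      simp only [hGdef]; ring
    rw [heq]
    have : 0 < t ^ n1 * ((|v t| ^ q + ε * t ^ α) * ((-1:ℝ)^(j-1) * v t)) :=
      mul_pos htpos (mul_pos hB hvt)
    linarith
  -- strict antitonicity of σ_j • W on closed nodal intervals, j ≥ 2
  have hWanti : ∀ j, 2 ≤ j → j ≤ k →
      StrictAntiOn (fun t => (-1:ℝ)^(j-1) * W t) (Icc (R (j-1)) (R j)) := by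
    intro j h1 h2
    have hprev0 : 0 < R (j-1) := hR0lt (j-1) (by omega) (by omega)
    have hIccS : Icc (R (j-1)) (R j) ⊆ S := fun t ht =>
      ⟨lt_of_lt_of_le hprev0 ht.1, le_trans ht.2 (hRle1 j (by omega) h2)⟩
    apply strictAntiOn_of_deriv_neg (convex_Icc _ _)
      (continuousOn_const.mul (hWcont.mono hIccS))
    intro t ht
    rw [interior_Icc] at ht
    have ht01 : t ∈ Ioo (0:ℝ) 1 := ⟨lt_trans hprev0 ht.1,
      lt_of_lt_of_le ht.2 (hRle1 j (by omega) h2)⟩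
    show deriv (fun y => (-1:ℝ)^(j-1) * W y) t < 0
    rw [((hWderiv t ht01).const_mul ((-1:ℝ)^(j-1))).deriv]
    exact hGsign j (by omega) h2 t ht.1 ht.2
  -- j = 1 : W is negative on (0, R 1]
  have hW1anti : StrictAntiOn W (Ioc 0 (R 1)) := by
    have hIocS : Ioc 0 (R 1) ⊆ S := fun t ht => ⟨ht.1, le_trans ht.2 (hRle1 1 le_rfl hk1)⟩
    apply strictAntiOn_of_deriv_neg (convex_Ioc _ _) (hWcont.mono hIocS)
    intro t ht
    rw [interior_Ioc] at ht
    have ht01 : t ∈ Ioo (0:ℝ) 1 := ⟨ht.1, lt_of_lt_of_le ht.2 (hRle1 1 le_rfl hk1)⟩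
    rw [(hWderiv t ht01).deriv]
    have := hGsign 1 le_rfl hk1 t (by simpa [hR0] using ht.1) ht.2
    simpa using this
  have hW1neg : ∀ x ∈ Ioc (0:ℝ) (R 1), W x < 0 := by
    have hW1le : ∀ m ∈ Ioc (0:ℝ) (R 1), W m ≤ 0 := by
      intro m hm
      apply ge_of_tendsto hlimW
      have hmem : Ioo (0:ℝ) m ∈ nhdsWithin (0:ℝ) (Ioi 0) :=
        mem_nhdsWithin.mpr ⟨Iio m, isOpen_Iio, hm.1, fun s hs => ⟨hs.2, hs.1⟩⟩
      filter_upwards [hmem] with m' hm'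
      exact le_of_lt (hW1anti ⟨hm'.1, le_trans (le_of_lt hm'.2) hm.2⟩ hm hm'.2)
    intro x hx
    have hhalf : x/2 ∈ Ioc (0:ℝ) (R 1) :=
      ⟨by linarith [hx.1], le_trans (by linarith [hx.1]) hx.2⟩
    have h1 : W x < W (x/2) := hW1anti hhalf hx (by linarith [hx.1])
    have h2 := hW1le (x/2) hhalf
    linarith
  -- existence of the interior critical point
  have hrex : ∀ j, 2 ≤ j → j ≤ k → ∃ y, y ∈ Ioo (R (j-1)) (R j) ∧ W y = 0 := by
    intro j h1 h2
    have hprev0 : 0 < R (j-1) := hR0lt (j-1) (by omega) (by omega)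
    have hIccS : Icc (R (j-1)) (R j) ⊆ S := fun t ht =>
      ⟨lt_of_lt_of_le hprev0 ht.1, le_trans ht.2 (hRle1 j (by omega) h2)⟩
    have hWl : 0 < (-1:ℝ)^(j-1) * W (R (j-1)) := by
      have hd := hdvRj (j-1) (by omega) (by omega)
      have hσ : ((-1:ℝ))^(j-1) = -((-1:ℝ))^(j-1-1) := hσflip (j-1) (by omega)
      have hp : 0 < (R (j-1)) ^ n1 := Real.rpow_pos_of_pos hprev0 _
      have heq : (-1:ℝ)^(j-1) * W (R (j-1))
          = (R (j-1)) ^ n1 * (-((-1:ℝ)^(j-1-1) * dv (R (j-1)))) := by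
        show (-1:ℝ)^(j-1) * ((R (j-1)) ^ n1 * dv (R (j-1))) = _
        rw [hσ]; ring
      rw [heq]
      exact mul_pos hp (by linarith)
    have hWr : (-1:ℝ)^(j-1) * W (R j) < 0 := by
      have hd := hdvRj j (by omega) h2
      have hp : 0 < (R j) ^ n1 := Real.rpow_pos_of_pos (hR0lt j (by omega) h2) _
      have heq : (-1:ℝ)^(j-1) * W (R j)
          = (R j) ^ n1 * ((-1:ℝ)^(j-1) * dv (R j)) := by
        show (-1:ℝ)^(j-1) * ((R j) ^ n1 * dv (R j)) = _
        ring
      rw [heq]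
      exact mul_neg_of_pos_of_neg hp hd
    have hcont : ContinuousOn (fun t => (-1:ℝ)^(j-1) * W t) (Icc (R (j-1)) (R j)) :=
      continuousOn_const.mul (hWcont.mono hIccS)
    obtain ⟨y, hy, hy0⟩ := intermediate_value_Ioo' (le_of_lt (hRprevlt j (by omega) h2)) hcont
      (⟨hWr, hWl⟩ : (0:ℝ) ∈ Ioo ((-1:ℝ)^(j-1) * W (R j)) ((-1:ℝ)^(j-1) * W (R (j-1))))
    refine ⟨y, hy, ?_⟩
    rcases mul_eq_zero.mp hy0 with h | h
    · exact absurd h (pow_ne_zero _ (by norm_num))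
    · exact h
  -- definition of critical points
  set rr : ℕ → ℝ := fun j => if h : 2 ≤ j ∧ j ≤ k then Classical.choose (hrex j h.1 h.2)
    else if j ≤ 1 then 0 else 1 with hrrdef
  have hrval : ∀ j (h1 : 2 ≤ j) (h2 : j ≤ k),
      rr j ∈ Ioo (R (j-1)) (R j) ∧ W (rr j) = 0 := by
    intro j h1 h2
    simp only [hrrdef]
    rw [dif_pos ⟨h1, h2⟩]
    exact Classical.choose_spec (hrex j h1 h2)
  have hrr1 : rr 1 = 0 := by simp [hrrdef]
  have hrrtop : ∀ j, k < j → rr j = 1 := by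
    intro j hj
    simp only [hrrdef]
    rw [dif_neg (by omega), if_neg (by omega)]
  -- sign of W on (rr j, rr (j+1))
  have hWsgn : ∀ j, 1 ≤ j → j ≤ k → ∀ x, rr j < x → x < rr (j + 1) →
      (-1:ℝ)^(j-1) * W x < 0 := by
    intro j h1 h2 x hx1 hx2
    rcases le_or_gt x (R j) with hxR | hxR
    · -- left part
      rcases Nat.lt_or_ge j 2 with hj1 | hj2
      · -- j = 1
        have hj : j = 1 := by omega
        subst hj
        rw [hrr1] at hx1
        have := hW1neg x ⟨hx1, hxR⟩
        simpa using this
      · -- j ≥ 2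
        obtain ⟨hmem, hW0⟩ := hrval j hj2 h2
        have hanti := hWanti j hj2 h2
        have hxmem : x ∈ Icc (R (j-1)) (R j) := ⟨le_of_lt (lt_trans hmem.1 hx1), hxR⟩
        have hrmem : rr j ∈ Icc (R (j-1)) (R j) := ⟨le_of_lt hmem.1, le_of_lt hmem.2⟩
        have := hanti hrmem hxmem hx1
        simp only [] at this
        rw [hW0, mul_zero] at this
        exact this
    · -- right part : R j < x, so j < k
      have hjk : j < k := by
        by_contra hge
        have hjeq : j = k := by omega
        have ht := hrrtop (j+1) (by omega)
        rw [ht] at hx2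
        have hR1 : R j = 1 := by rw [hjeq, hRk1]
        rw [hR1] at hxR
        linarith
      obtain ⟨hmem, hW0⟩ := hrval (j+1) (by omega) (by omega)
      simp only [Nat.add_sub_cancel] at hmem
      have hanti := hWanti (j+1) (by omega) (by omega)
      simp only [Nat.add_sub_cancel] at hanti
      have hxmem : x ∈ Icc (R j) (R (j+1)) :=
        ⟨le_of_lt hxR, le_of_lt (lt_trans hx2 hmem.2)⟩
      have hrmem : rr (j+1) ∈ Icc (R j) (R (j+1)) := ⟨le_of_lt hmem.1, le_of_lt hmem.2⟩
      have h5 := hanti hxmem hrmem hx2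
      have this2 : (-1:ℝ)^(j+1-1) * W (rr (j+1)) < (-1:ℝ)^(j+1-1) * W x := h5
      rw [hW0, mul_zero] at this2
      have this := this2
      -- this : 0 < (-1)^(j+1-1) * W x
      simp only [Nat.add_sub_cancel] at this2
      have this := this2
      rw [hσflip j h1] at this
      linarith
  -- final assembly
  refine ⟨k, hk1, R, rr, hR0, hrr1, hRk1, hrrtop (k+1) (by omega), ?_, ?_, ?_⟩
  · intro j h1 h2
    rcases Nat.lt_or_ge j 2 with hj1 | hj2
    · have hj : j = 1 := by omega
      subst hj
      rw [hrr1]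
      exact hR0lt 1 le_rfl h2
    · exact (hrval j hj2 h2).1.2
  · intro j h1 h2
    have := (hrval (j+1) (by omega) h2).1.1
    simpa [Nat.add_sub_cancel] using this
  · intro j h1 h2
    refine ⟨fun x hx => hsign j h1 h2 x hx.1 hx.2, hvR j h1 h2, ?_, ?_⟩
    · intro x hx
      have hx0 : 0 < x := by
        rcases Nat.lt_or_ge j 2 with hj1 | hj2
        · have hj : j = 1 := by omega
          subst hj
          rw [hrr1] at hx
          exact hx.1
        · have := (hrval j hj2 h2).1.1
          have hprev0 : (0:ℝ) ≤ R (j-1) := hRprev0 j h1 h2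
          linarith [hx.1]
      have hx1 : x < 1 := by
        rcases Nat.lt_or_ge j k with hjk | hjk
        · have := (hrval (j+1) (by omega) (by omega)).1.2
          have hle := hRle1 (j+1) (by omega) (by omega)
          linarith [hx.2]
        · have hjeq : j = k := by omega
          have ht := hrrtop (j+1) (by omega)
          have := hx.2
          rw [ht] at this
          exact this
      have hx01 : x ∈ Ioo (0:ℝ) 1 := ⟨hx0, hx1⟩
      have hWx := hWsgn j h1 h2 x hx.1 hx.2
      have hp : 0 < x ^ n1 := Real.rpow_pos_of_pos hx0 _
      have heq : (-1:ℝ)^(j-1) * W x = x ^ n1 * ((-1:ℝ)^(j-1) * dv x) := by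
        show (-1:ℝ)^(j-1) * (x ^ n1 * dv x) = _
        ring
      rw [heq] at hWx
      have hdvx : (-1:ℝ)^(j-1) * dv x < 0 := by
        by_contra hge
        push_neg at hge
        exact absurd hWx (not_lt.mpr (mul_nonneg (le_of_lt hp) hge))
      rw [← hdvIoo x hx01] at *
      rw [hσflip j h1]
      linarith
    · intro hj2
      obtain ⟨hmem, hW0⟩ := hrval j hj2 h2
      have hprev0 : 0 < R (j-1) := hR0lt (j-1) (by omega) (by omega)
      have hrr01 : rr j ∈ Ioo (0:ℝ) 1 :=
        ⟨lt_trans hprev0 hmem.1, lt_of_lt_of_le hmem.2 (hRle1 j h1 h2)⟩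
      have hp : (rr j) ^ n1 ≠ 0 := ne_of_gt (Real.rpow_pos_of_pos hrr01.1 _)
      have hdv0 : dv (rr j) = 0 := by
        have : (rr j) ^ n1 * dv (rr j) = 0 := hW0
        rcases mul_eq_zero.mp this with h | h
        · exact absurd h hp
        · exact h
      rw [← hdvIoo (rr j) hrr01]
      exact hdv0
end
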